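/- arXiv:2211.10912 — 6 statements merged into one kernel-verified Lean document; each statement's English description precedes it below -/
import Mathlib

section
/- If Q = (q_{ij}) is a symmetric n×n real matrix that is diagonally dominant with nonnegative diagonals, i.e., q_{ii} ≥ Σ_{j≠i} |q_{ij}| for all i, then the quadratic function f(x) = xᵀQx on ℤⁿ is integrally convex. -/
noncomputable section

def coeZR {n : ℕ} (z : Fin n → ℤ) : Fin n → ℝ := fun i => (z i : ℝ)

def IntNbhd {n : ℕ} (x : Fin n → ℝ) : Set (Fin n → ℤ) :=
  {z | ∀ i, |x i - (z i : ℝ)| < 1}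

def IntegrallyConvexSet {n : ℕ} (S : Set (Fin n → ℤ)) : Prop :=
  ∀ x ∈ convexHull ℝ (coeZR '' S), x ∈ convexHull ℝ (coeZR '' (S ∩ IntNbhd x))
def localConvexExt {n : ℕ} (f : (Fin n → ℤ) → EReal) (x : Fin n → ℝ) : EReal :=
  sInf { v : EReal | ∃ l : (Fin n → ℤ) →₀ ℝ,
    (∀ z, 0 ≤ l z) ∧ (∀ z ∈ l.support, z ∈ IntNbhd x) ∧
    (l.sum fun _ a => a) = 1 ∧
    (l.sum fun z a => a • coeZR z) = x ∧
    v = l.sum fun z a => (a : EReal) * f z }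

def ERealConvexOn {n : ℕ} (g : (Fin n → ℝ) → EReal) : Prop :=
  ∀ x y : Fin n → ℝ, ∀ a b : ℝ, 0 ≤ a → 0 ≤ b → a + b = 1 →
    g (a • x + b • y) ≤ (a : EReal) * g x + (b : EReal) * g y

def IntegrallyConvexFn {n : ℕ} (f : (Fin n → ℤ) → EReal) : Prop :=
  ERealConvexOn (localConvexExt f)

def eh (u : ℤ) : ℤ := u.sign * ((u.natAbs) / 2 : ℕ)
def oh (u : ℤ) : ℤ := u.sign * (((u.natAbs) + 1) / 2 : ℕ)

lemma eh_add_oh (u : ℤ) : eh u + oh u = u := by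
  rw [eh, oh, ← mul_add]
  have h2 : ((u.natAbs / 2 : ℕ) : ℤ) + (((u.natAbs + 1) / 2 : ℕ) : ℤ) = (u.natAbs : ℤ) := by
    omega
  rw [h2, Int.sign_mul_natAbs]

lemma natAbs_eh (u : ℤ) : (eh u).natAbs = u.natAbs / 2 := by
  rw [eh]
  rcases Int.lt_trichotomy u 0 with h | h | h
  · rw [Int.sign_eq_neg_one_of_neg h]; omega
  · simp [h]
  · rw [Int.sign_eq_one_of_pos h]; omega

lemma natAbs_oh (u : ℤ) : (oh u).natAbs = (u.natAbs + 1) / 2 := by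
  rw [oh]
  rcases Int.lt_trichotomy u 0 with h | h | h
  · rw [Int.sign_eq_neg_one_of_neg h]; omega
  · simp [h]
  · rw [Int.sign_eq_one_of_pos h]; omega

lemma eh_mul_oh_nonneg (u : ℤ) : 0 ≤ eh u * oh u := by
  rw [eh, oh]
  have he : u.sign * (u.natAbs / 2 : ℕ) * (u.sign * ((u.natAbs + 1) / 2 : ℕ))
      = (u.sign * u.sign) * ((u.natAbs / 2 : ℕ) * ((u.natAbs + 1) / 2 : ℕ)) := by ring
  rw [he]
  apply mul_nonneg
  · rcases Int.lt_trichotomy u 0 with h | h | h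
    · simp [Int.sign_eq_neg_one_of_neg h]
    · simp [h]
    · simp [Int.sign_eq_one_of_pos h]
  · positivity

lemma eh_mul_oh_ge_one (u : ℤ) (h : 2 ≤ u.natAbs) : 1 ≤ eh u * oh u := by
  have habs : (eh u * oh u).natAbs = (u.natAbs / 2) * ((u.natAbs + 1) / 2) := by
    rw [Int.natAbs_mul, natAbs_eh, natAbs_oh]
  have h1 : 1 ≤ (u.natAbs / 2) * ((u.natAbs + 1) / 2) := by
    have h2 : 1 ≤ u.natAbs / 2 := by omega
    have h3 : 1 ≤ (u.natAbs + 1) / 2 := by omega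
    exact Nat.one_le_iff_ne_zero.mpr (by positivity)
  have := eh_mul_oh_nonneg u
  omega

lemma eh_between (u : ℤ) : min 0 u ≤ eh u ∧ eh u ≤ max 0 u := by
  rcases Int.lt_trichotomy u 0 with h | h | h
  · rw [min_eq_right h.le, max_eq_left h.le, eh, Int.sign_eq_neg_one_of_neg h]
    omega
  · simp [h, eh]
  · rw [min_eq_left h.le, max_eq_right h.le, eh, Int.sign_eq_one_of_pos h]
    omega

lemma oh_between (u : ℤ) : min 0 u ≤ oh u ∧ oh u ≤ max 0 u := by
  rcases Int.lt_trichotomy u 0 with h | h | h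
  · rw [min_eq_right h.le, max_eq_left h.le, oh, Int.sign_eq_neg_one_of_neg h]
    omega
  · simp [h, oh]
  · rw [min_eq_left h.le, max_eq_right h.le, oh, Int.sign_eq_one_of_pos h]
    omega

lemma eh_oh_mono (u v : ℤ) :
    |eh u| * |oh v| + |eh v| * |oh u| ≤ |eh u| * |oh u| + |eh v| * |oh v| := by
  have e1 : |eh u| = ((u.natAbs / 2 : ℕ) : ℤ) := by
    rw [Int.abs_eq_natAbs, natAbs_eh]
  have e2 : |eh v| = ((v.natAbs / 2 : ℕ) : ℤ) := by
    rw [Int.abs_eq_natAbs, natAbs_eh]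
  have e3 : |oh u| = (((u.natAbs + 1) / 2 : ℕ) : ℤ) := by
    rw [Int.abs_eq_natAbs, natAbs_oh]
  have e4 : |oh v| = (((v.natAbs + 1) / 2 : ℕ) : ℤ) := by
    rw [Int.abs_eq_natAbs, natAbs_oh]
  rw [e1, e2, e3, e4]
  rcases le_total u.natAbs v.natAbs with h | h
  · have h1 : ((u.natAbs / 2 : ℕ) : ℤ) ≤ ((v.natAbs / 2 : ℕ) : ℤ) := by omega
    have h2 : (((u.natAbs + 1) / 2 : ℕ) : ℤ) ≤ (((v.natAbs + 1) / 2 : ℕ) : ℤ) := by omega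
    nlinarith [mul_nonneg (sub_nonneg.mpr h1) (sub_nonneg.mpr h2)]
  · have h1 : ((v.natAbs / 2 : ℕ) : ℤ) ≤ ((u.natAbs / 2 : ℕ) : ℤ) := by omega
    have h2 : (((v.natAbs + 1) / 2 : ℕ) : ℤ) ≤ (((u.natAbs + 1) / 2 : ℕ) : ℤ) := by omega
    nlinarith [mul_nonneg (sub_nonneg.mpr h1) (sub_nonneg.mpr h2)]

variable {n : ℕ} (Q : Matrix (Fin n) (Fin n) ℝ)

def bQ (v w : Fin n → ℝ) : ℝ := ∑ i, ∑ j, v i * Q i j * w j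

lemma bQ_symm (hsym : Q.IsSymm) (v w : Fin n → ℝ) : bQ Q v w = bQ Q w v := by
  rw [bQ, bQ, Finset.sum_comm]
  apply Finset.sum_congr rfl; intro j _
  apply Finset.sum_congr rfl; intro i _
  rw [show Q i j = Q j i from (Matrix.IsSymm.apply hsym j i)]
  ring

lemma bQ_add_left (v w u : Fin n → ℝ) : bQ Q (v + w) u = bQ Q v u + bQ Q w u := by
  rw [bQ, bQ, bQ, ← Finset.sum_add_distrib]
  apply Finset.sum_congr rfl; intro i _
  rw [← Finset.sum_add_distrib]
  apply Finset.sum_congr rfl; intro j _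
  simp [Pi.add_apply]; ring

lemma bQ_add_right (v w u : Fin n → ℝ) : bQ Q u (v + w) = bQ Q u v + bQ Q u w := by
  rw [bQ, bQ, bQ, ← Finset.sum_add_distrib]
  apply Finset.sum_congr rfl; intro i _
  rw [← Finset.sum_add_distrib]
  apply Finset.sum_congr rfl; intro j _
  simp [Pi.add_apply]; ring

lemma bQ_nonneg (hsym : Q.IsSymm)
    (hdd : ∀ i, ∑ j ∈ Finset.univ.erase i, |Q i j| ≤ Q i i)
    (α β : Fin n → ℝ)
    (hab : ∀ i, |α i| * |β i| = α i * β i)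
    (hmono : ∀ i j, |α i| * |β j| + |α j| * |β i| ≤ |α i| * |β i| + |α j| * |β j|) :
    0 ≤ bQ Q α β := by
  have hswap : ∀ (g : Fin n → Fin n → ℝ),
      ∑ i, ∑ j ∈ Finset.univ.erase i, g i j = ∑ i, ∑ j ∈ Finset.univ.erase i, g j i := by
    intro g
    rw [Finset.sum_sigma', Finset.sum_sigma']
    apply Finset.sum_nbij' (fun x => ⟨x.2, x.1⟩) (fun x => ⟨x.2, x.1⟩) <;>
      simp [Finset.mem_erase, eq_comm] <;> intros <;> simp_all [Ne, eq_comm]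
  have hsplit : bQ Q α β = (∑ i, α i * Q i i * β i)
      + ∑ i, ∑ j ∈ Finset.univ.erase i, α i * Q i j * β j := by
    rw [bQ, ← Finset.sum_add_distrib]
    apply Finset.sum_congr rfl; intro i _
    exact (Finset.add_sum_erase _ _ (Finset.mem_univ i)).symm
  have hoff : - (∑ i, ∑ j ∈ Finset.univ.erase i, |Q i j| * (|α i| * |β j|))
      ≤ ∑ i, ∑ j ∈ Finset.univ.erase i, α i * Q i j * β j := by
    rw [neg_le, ← Finset.sum_neg_distrib]
    apply Finset.sum_le_sum; intro i _
    rw [← Finset.sum_neg_distrib]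
    apply Finset.sum_le_sum; intro j _
    calc -(α i * Q i j * β j) ≤ |α i * Q i j * β j| := neg_le_abs _
      _ = |Q i j| * (|α i| * |β j|) := by rw [abs_mul, abs_mul]; ring
  have hT'T : ∑ i, ∑ j ∈ Finset.univ.erase i, |Q i j| * (|α j| * |β i|)
      = ∑ i, ∑ j ∈ Finset.univ.erase i, |Q i j| * (|α i| * |β j|) := by
    rw [hswap (fun i j => |Q i j| * (|α j| * |β i|))]
    apply Finset.sum_congr rfl; intro i _
    apply Finset.sum_congr rfl; intro j _
    rw [show |Q j i| = |Q i j| by rw [Matrix.IsSymm.apply hsym i j]]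
  have hU'U : ∑ i, ∑ j ∈ Finset.univ.erase i, |Q i j| * (|α j| * |β j|)
      = ∑ i, ∑ j ∈ Finset.univ.erase i, |Q i j| * (|α i| * |β i|) := by
    rw [hswap (fun i j => |Q i j| * (|α j| * |β j|))]
    apply Finset.sum_congr rfl; intro i _
    apply Finset.sum_congr rfl; intro j _
    rw [show |Q j i| = |Q i j| by rw [Matrix.IsSymm.apply hsym i j]]
  have h12 : (∑ i, ∑ j ∈ Finset.univ.erase i, |Q i j| * (|α i| * |β j|))
      + ∑ i, ∑ j ∈ Finset.univ.erase i, |Q i j| * (|α j| * |β i|)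
      ≤ (∑ i, ∑ j ∈ Finset.univ.erase i, |Q i j| * (|α i| * |β i|))
      + ∑ i, ∑ j ∈ Finset.univ.erase i, |Q i j| * (|α j| * |β j|) := by
    rw [← Finset.sum_add_distrib, ← Finset.sum_add_distrib]
    apply Finset.sum_le_sum; intro i _
    rw [← Finset.sum_add_distrib, ← Finset.sum_add_distrib]
    apply Finset.sum_le_sum; intro j _
    rw [← mul_add, ← mul_add]
    exact mul_le_mul_of_nonneg_left (hmono i j) (abs_nonneg _)
  have hU : ∑ i, ∑ j ∈ Finset.univ.erase i, |Q i j| * (|α i| * |β i|)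
      = ∑ i, (∑ j ∈ Finset.univ.erase i, |Q i j|) * (|α i| * |β i|) := by
    apply Finset.sum_congr rfl; intro i _
    rw [Finset.sum_mul]
  have hdiagbound : ∑ i, (∑ j ∈ Finset.univ.erase i, |Q i j|) * (|α i| * |β i|)
      ≤ ∑ i, α i * Q i i * β i := by
    apply Finset.sum_le_sum; intro i _
    calc (∑ j ∈ Finset.univ.erase i, |Q i j|) * (|α i| * |β i|)
        ≤ Q i i * (|α i| * |β i|) := by
          apply mul_le_mul_of_nonneg_right (hdd i)
          positivity
      _ = α i * Q i i * β i := by rw [hab i]; ring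
  linarith

def qQ (v : Fin n → ℝ) : ℝ := bQ Q v v

lemma qQ_add (hsym : Q.IsSymm) (v w : Fin n → ℝ) :
    qQ Q (v + w) = qQ Q v + 2 * bQ Q v w + qQ Q w := by
  rw [qQ, qQ, qQ, bQ_add_left, bQ_add_right, bQ_add_right, bQ_symm Q hsym w v]
  ring

lemma qQ_nonneg (hsym : Q.IsSymm)
    (hdd : ∀ i, ∑ j ∈ Finset.univ.erase i, |Q i j| ≤ Q i i) (v : Fin n → ℝ) :
    0 ≤ qQ Q v := by
  apply bQ_nonneg Q hsym hdd
  · intro i; exact abs_mul_abs_self _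
  · intro i j
    nlinarith [sq_nonneg (|v i| - |v j|), abs_nonneg (v i), abs_nonneg (v j)]

def coeZR' {n : ℕ} (z : Fin n → ℤ) : Fin n → ℝ := fun i => (z i : ℝ)

lemma coeZR'_add {n : ℕ} (z w : Fin n → ℤ) : coeZR' (z + w) = coeZR' z + coeZR' w := by
  funext i; simp [coeZR']

variable {n : ℕ} (Q : Matrix (Fin n) (Fin n) ℝ)

/-- the function f as a real-valued function on ℤⁿ -/
def fqQ (z : Fin n → ℤ) : ℝ := qQ Q (coeZR' z)

lemma split_nonneg (hsym : Q.IsSymm)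
    (hdd : ∀ i, ∑ j ∈ Finset.univ.erase i, |Q i j| ≤ Q i i) (u : Fin n → ℤ) :
    0 ≤ bQ Q (coeZR' (fun i => oh (u i))) (coeZR' (fun i => eh (u i))) := by
  apply bQ_nonneg Q hsym hdd
  · intro i
    simp only [coeZR']
    have h := eh_mul_oh_nonneg (u i)
    have h0 : (0:ℝ) ≤ (oh (u i) : ℝ) * (eh (u i) : ℝ) := by
      have : (0:ℝ) ≤ ((eh (u i) * oh (u i) : ℤ) : ℝ) := by exact_mod_cast h
      push_cast at this; linarith
    rw [← abs_mul, abs_of_nonneg h0]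
  · intro i j
    simp only [coeZR']
    have h := eh_oh_mono (u i) (u j)
    have hc : (|(eh (u i) : ℝ)| * |(oh (u j) : ℝ)| + |(eh (u j) : ℝ)| * |(oh (u i) : ℝ)|)
        ≤ |(eh (u i) : ℝ)| * |(oh (u i) : ℝ)| + |(eh (u j) : ℝ)| * |(oh (u j) : ℝ)| := by
      have := h
      push_cast [← Int.cast_abs] at *
      exact_mod_cast this
    linarith [hc]

lemma exchange_identity (hsym : Q.IsSymm) (z w : Fin n → ℤ) :
    fqQ Q (z + fun i => oh ((w - z) i)) + fqQ Q (z + fun i => eh ((w - z) i))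
      = fqQ Q z + fqQ Q w
        - 2 * bQ Q (coeZR' (fun i => oh ((w - z) i))) (coeZR' (fun i => eh ((w - z) i))) := by
  set u : Fin n → ℤ := w - z with hu
  set d1 : Fin n → ℤ := fun i => oh (u i) with hd1
  set d2 : Fin n → ℤ := fun i => eh (u i) with hd2
  have hw : w = z + (d1 + d2) := by
    funext i
    have := eh_add_oh (u i)
    simp only [Pi.add_apply, hd1, hd2]
    have hui : u i = w i - z i := by rw [hu]; simp
    omega
  have e1 : fqQ Q (z + d1) = qQ Q (coeZR' z) + 2 * bQ Q (coeZR' z) (coeZR' d1)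
      + qQ Q (coeZR' d1) := by
    rw [fqQ, coeZR'_add, qQ_add Q hsym]
  have e2 : fqQ Q (z + d2) = qQ Q (coeZR' z) + 2 * bQ Q (coeZR' z) (coeZR' d2)
      + qQ Q (coeZR' d2) := by
    rw [fqQ, coeZR'_add, qQ_add Q hsym]
  have e3 : fqQ Q w = qQ Q (coeZR' z) + 2 * (bQ Q (coeZR' z) (coeZR' d1)
      + bQ Q (coeZR' z) (coeZR' d2))
      + (qQ Q (coeZR' d1) + 2 * bQ Q (coeZR' d1) (coeZR' d2) + qQ Q (coeZR' d2)) := by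
    rw [hw, fqQ, coeZR'_add, qQ_add Q hsym, coeZR'_add, qQ_add Q hsym, bQ_add_right]
  have e4 : fqQ Q z = qQ Q (coeZR' z) := rfl
  rw [e1, e2, e3, e4]; ring

/-- Euclidean versions via the identity matrix -/
lemma bI_eq (v w : Fin n → ℝ) : bQ (1 : Matrix (Fin n) (Fin n) ℝ) v w = ∑ i, v i * w i := by
  rw [bQ]
  apply Finset.sum_congr rfl; intro i _
  rw [Finset.sum_eq_single i]
  · simp [Matrix.one_apply]
  · intro j _ hj; simp [Matrix.one_apply, (Ne.symm hj)]
  · intro h; exact absurd (Finset.mem_univ i) h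

lemma one_isSymm : (1 : Matrix (Fin n) (Fin n) ℝ).IsSymm := Matrix.isSymm_one

lemma one_dd : ∀ i, ∑ j ∈ Finset.univ.erase i, |(1 : Matrix (Fin n) (Fin n) ℝ) i j|
    ≤ (1 : Matrix (Fin n) (Fin n) ℝ) i i := by
  intro i
  rw [Finset.sum_eq_zero]
  · simp [Matrix.one_apply]
  · intro j hj
    have : j ≠ i := (Finset.mem_erase.mp hj).1
    simp [Matrix.one_apply, Ne.symm this]

lemma dot_ge_one (u : Fin n → ℤ) (i₀ : Fin n) (h : 2 ≤ (u i₀).natAbs) :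
    1 ≤ ∑ i, ((oh (u i) : ℝ) * (eh (u i) : ℝ)) := by
  have : ((1:ℤ):ℝ) ≤ ((∑ i, oh (u i) * eh (u i) : ℤ) : ℝ) := by
    apply Int.cast_le.mpr
    calc (1:ℤ) ≤ oh (u i₀) * eh (u i₀) := by
          have := eh_mul_oh_ge_one (u i₀) h; linarith [this]
      _ ≤ ∑ i, oh (u i) * eh (u i) := by
          apply Finset.single_le_sum (f := fun i => oh (u i) * eh (u i))
          · intro i _; have := eh_mul_oh_nonneg (u i); linarith
          · exact Finset.mem_univ i₀
  push_cast at this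
  linarith

set_option maxHeartbeats 1000000 in
lemma localize (hsym : Q.IsSymm)
    (hdd : ∀ i, ∑ j ∈ Finset.univ.erase i, |Q i j| ≤ Q i i)
    (p : Fin n → ℝ) (l : (Fin n → ℤ) →₀ ℝ)
    (h0 : ∀ z, 0 ≤ l z) (h1 : l.sum (fun _ t => t) = 1)
    (hx : ∀ i, l.sum (fun z t => t * (z i : ℝ)) = p i) :
    ∃ l' : (Fin n → ℤ) →₀ ℝ, (∀ z, 0 ≤ l' z) ∧
      (∀ z ∈ l'.support, ∀ i, |p i - (z i : ℝ)| < 1) ∧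
      l'.sum (fun _ t => t) = 1 ∧
      (∀ i, l'.sum (fun z t => t * (z i : ℝ)) = p i) ∧
      l'.sum (fun z t => t * fqQ Q z) ≤ l.sum (fun z t => t * fqQ Q z) := by
  classical
  have hne : l.support.Nonempty := by
    rcases Finset.eq_empty_or_nonempty l.support with h | h
    · exfalso
      have : l.sum (fun _ t => t) = 0 := by rw [Finsupp.sum, h, Finset.sum_empty]
      rw [h1] at this; norm_num at this
    · exact h
  set lo : Fin n → ℤ := fun i => l.support.inf' hne (fun z => z i) with hlo
  set hi : Fin n → ℤ := fun i => l.support.sup' hne (fun z => z i) with hhi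
  set B : Finset (Fin n → ℤ) := Finset.Icc lo hi with hB
  have hsuppB : l.support ⊆ B := by
    intro z hz
    rw [hB, Finset.mem_Icc]
    constructor
    · intro i; exact Finset.inf'_le (fun z => z i) hz
    · intro i; exact Finset.le_sup' (fun z => z i) hz
  -- the compact feasible region
  set V := ({z // z ∈ B} → ℝ) with hV
  set A : Set V := {v | (∀ z, 0 ≤ v z) ∧ (∑ z, v z) = 1 ∧
      (∀ i, (∑ z, v z * ((z : { z // z ∈ B}).1 i : ℝ)) = p i) ∧
      (∑ z, v z * fqQ Q (z : { z // z ∈ B}).1) ≤ l.sum (fun z t => t * fqQ Q z)} with hA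
  -- transfer sums over l to sums over B
  have hxfer : ∀ c : (Fin n → ℤ) → ℝ,
      (∑ z : {z // z ∈ B}, l z.1 * c z.1) = l.sum (fun z t => t * c z) := by
    intro c
    rw [Finset.univ_eq_attach, Finset.sum_attach B (fun z => l z * c z), Finsupp.sum]
    exact (Finset.sum_subset hsuppB (by
      intro z _ hz
      rw [Finsupp.notMem_support_iff.mp hz, zero_mul])).symm
  have hv₀A : (fun z : {z // z ∈ B} => l z.1) ∈ A := by
    refine ⟨fun z => h0 z.1, ?_, ?_, ?_⟩
    · have := hxfer (fun _ => 1)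
      simp only [mul_one] at this
      exact this.trans h1
    · intro i
      have := hxfer (fun z => (z i : ℝ))
      exact this.trans (hx i)
    · exact le_of_eq (hxfer (fun z => fqQ Q z))
  have hAsub : A ⊆ Set.Icc (0 : V) 1 := by
    intro v hv
    constructor
    · intro z; exact hv.1 z
    · intro z
      calc v z ≤ ∑ w, v w := by
            apply Finset.single_le_sum (f := fun w => v w)
            · intro w _; exact hv.1 w
            · exact Finset.mem_univ z
        _ = 1 := hv.2.1
      
  have hAclosed : IsClosed A := by
    have c1 : IsClosed {v : V | ∀ z, 0 ≤ v z} := by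
      rw [Set.setOf_forall]
      exact isClosed_iInter (fun z => isClosed_le continuous_const (continuous_apply z))
    have hcont : ∀ c : (Fin n → ℤ) → ℝ,
        Continuous fun v : V => ∑ z, v z * c (z : { z // z ∈ B}).1 := by
      intro c
      exact continuous_finset_sum _ (fun z _ => (continuous_apply z).mul continuous_const)
    have c2 : IsClosed {v : V | (∑ z, v z) = 1} := by
      have : Continuous fun v : V => ∑ z, v z :=
        continuous_finset_sum _ (fun z _ => continuous_apply z)
      exact isClosed_eq this continuous_const
    have c3 : IsClosed {v : V | ∀ i, (∑ z, v z * ((z : { z // z ∈ B}).1 i : ℝ)) = p i} := by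
      rw [Set.setOf_forall]
      exact isClosed_iInter (fun i => isClosed_eq (hcont (fun z => (z i : ℝ))) continuous_const)
    have c4 : IsClosed {v : V | (∑ z, v z * fqQ Q (z : { z // z ∈ B}).1)
        ≤ l.sum (fun z t => t * fqQ Q z)} :=
      isClosed_le (hcont (fun z => fqQ Q z)) continuous_const
    exact c1.inter (c2.inter (c3.inter c4))
  have hAcompact : IsCompact A :=
    (isCompact_Icc (a := (0:V)) (b := 1)).of_isClosed_subset hAclosed hAsub
  have hpsicont : Continuous fun v : V =>
      ∑ z, v z * fqQ (1 : Matrix (Fin n) (Fin n) ℝ) (z : { z // z ∈ B}).1 :=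
    continuous_finset_sum _ (fun z _ => (continuous_apply z).mul continuous_const)
  obtain ⟨v, hvA, hmin⟩ := hAcompact.exists_isMinOn ⟨_, hv₀A⟩ hpsicont.continuousOn
  -- the support of the minimizer is pairwise ℓ∞-close
  have hvnn : ∀ x, 0 ≤ v x := hvA.1
  have hclaim : ∀ z w : {z // z ∈ B}, v z ≠ 0 → v w ≠ 0 → ∀ i,
      (w.1 i - z.1 i).natAbs ≤ 1 := by
    by_contra hcon
    push_neg at hcon
    obtain ⟨z, w, hvz, hvw, i₀, hi₀⟩ := hcon
    have hu₀ : 2 ≤ (w.1 i₀ - z.1 i₀).natAbs := hi₀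
    set u : Fin n → ℤ := w.1 - z.1 with hu
    have hui : ∀ i, u i = w.1 i - z.1 i := fun i => rfl
    set d1 : Fin n → ℤ := fun i => oh (u i) with hd1
    set d2 : Fin n → ℤ := fun i => eh (u i) with hd2
    have hzB := Finset.mem_Icc.mp z.2
    have hwB := Finset.mem_Icc.mp w.2
    have hbet : ∀ i, (min 0 (u i) ≤ d1 i ∧ d1 i ≤ max 0 (u i)) ∧
        (min 0 (u i) ≤ d2 i ∧ d2 i ≤ max 0 (u i)) :=
      fun i => ⟨oh_between (u i), eh_between (u i)⟩
    have hm1B : z.1 + d1 ∈ B := by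
      rw [Finset.mem_Icc]
      constructor <;> intro i <;>
      · have h1 := (hbet i).1.1
        have h2 := (hbet i).1.2
        have hzlo : lo i ≤ z.1 i := hzB.1 i
        have hzhi : z.1 i ≤ hi i := hzB.2 i
        have hwlo : lo i ≤ w.1 i := hwB.1 i
        have hwhi : w.1 i ≤ hi i := hwB.2 i
        have huii := hui i
        rcases le_total (0:ℤ) (u i) with h | h
        · rw [min_eq_left h] at h1
          rw [max_eq_right h] at h2
          simp only [Pi.add_apply]; omega
        · rw [min_eq_right h] at h1
          rw [max_eq_left h] at h2
          simp only [Pi.add_apply]; omega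
    have hm2B : z.1 + d2 ∈ B := by
      rw [Finset.mem_Icc]
      constructor <;> intro i <;>
      · have h1 := (hbet i).2.1
        have h2 := (hbet i).2.2
        have hzlo : lo i ≤ z.1 i := hzB.1 i
        have hzhi : z.1 i ≤ hi i := hzB.2 i
        have hwlo : lo i ≤ w.1 i := hwB.1 i
        have hwhi : w.1 i ≤ hi i := hwB.2 i
        have huii := hui i
        rcases le_total (0:ℤ) (u i) with h | h
        · rw [min_eq_left h] at h1
          rw [max_eq_right h] at h2
          simp only [Pi.add_apply]; omega
        · rw [min_eq_right h] at h1
          rw [max_eq_left h] at h2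
          simp only [Pi.add_apply]; omega
    set m1 : {z // z ∈ B} := ⟨z.1 + d1, hm1B⟩ with hm1
    set m2 : {z // z ∈ B} := ⟨z.1 + d2, hm2B⟩ with hm2
    have huii₀ : u i₀ = w.1 i₀ - z.1 i₀ := rfl
    have hd1i₀ : d1 i₀ = oh (u i₀) := rfl
    have hd2i₀ : d2 i₀ = eh (u i₀) := rfl
    have hohne : oh (u i₀) ≠ 0 := by
      intro h
      have h1 := natAbs_oh (u i₀)
      rw [h] at h1
      simp only [Int.natAbs_zero] at h1
      omega
    have hehne : eh (u i₀) ≠ 0 := by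
      intro h
      have h1 := natAbs_eh (u i₀)
      rw [h] at h1
      simp only [Int.natAbs_zero] at h1
      omega
    have hadd₀ := eh_add_oh (u i₀)
    have hm1z : m1 ≠ z := by
      intro h
      have : (z.1 + d1) i₀ = z.1 i₀ := by rw [show z.1 + d1 = z.1 from congrArg Subtype.val h]
      simp only [Pi.add_apply] at this
      exact hohne (by omega)
    have hm2z : m2 ≠ z := by
      intro h
      have : (z.1 + d2) i₀ = z.1 i₀ := by rw [show z.1 + d2 = z.1 from congrArg Subtype.val h]
      simp only [Pi.add_apply] at this
      exact hehne (by omega)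
    have hm1w : m1 ≠ w := by
      intro h
      have : (z.1 + d1) i₀ = w.1 i₀ := by rw [show z.1 + d1 = w.1 from congrArg Subtype.val h]
      simp only [Pi.add_apply] at this
      have huii := hui i₀
      exact hehne (by omega)
    have hm2w : m2 ≠ w := by
      intro h
      have : (z.1 + d2) i₀ = w.1 i₀ := by rw [show z.1 + d2 = w.1 from congrArg Subtype.val h]
      simp only [Pi.add_apply] at this
      have huii := hui i₀
      exact hohne (by omega)
    have hzw : z ≠ w := by
      intro h
      rw [h] at hu₀
      simp at hu₀
    set t : ℝ := min (v z) (v w) with ht'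
    have ht : 0 < t := lt_min ((hvnn z).lt_of_ne (Ne.symm hvz)) ((hvnn w).lt_of_ne (Ne.symm hvw))
    set v' : V := fun x => v x + t * (((if x = m1 then (1:ℝ) else 0) + (if x = m2 then 1 else 0))
        - ((if x = z then 1 else 0) + (if x = w then 1 else 0))) with hv'
    have e1 : ∀ (y : {z // z ∈ B}) (c : {z // z ∈ B} → ℝ),
        ∑ x, (if x = y then (1:ℝ) else 0) * c x = c y := by
      intro y c
      rw [Finset.sum_eq_single y]
      · simp
      · intro b _ hb; simp [hb]
      · intro h; exact absurd (Finset.mem_univ y) h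
    have hxfer' : ∀ c : {z // z ∈ B} → ℝ,
        ∑ x, v' x * c x = (∑ x, v x * c x) + t * ((c m1 + c m2) - (c z + c w)) := by
      intro c
      have expand : ∀ x, v' x * c x = v x * c x
          + t * (((if x = m1 then (1:ℝ) else 0) * c x + (if x = m2 then 1 else 0) * c x)
          - ((if x = z then 1 else 0) * c x + (if x = w then 1 else 0) * c x)) := by
        intro x; rw [hv']; ring
      rw [Finset.sum_congr rfl (fun x _ => expand x), Finset.sum_add_distrib, ← Finset.mul_sum,
        Finset.sum_sub_distrib, Finset.sum_add_distrib, Finset.sum_add_distrib,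
        e1 m1 c, e1 m2 c, e1 z c, e1 w c]
    have hv'A : v' ∈ A := by
      refine ⟨?_, ?_, ?_, ?_⟩
      · intro x
        have hval : v' x = v x + t * (((if x = m1 then (1:ℝ) else 0)
            + (if x = m2 then 1 else 0))
            - ((if x = z then 1 else 0) + (if x = w then 1 else 0))) := rfl
        by_cases hxz : x = z
        · rw [hval, if_pos hxz, if_neg (show x ≠ m1 by rw [hxz]; exact Ne.symm hm1z),
            if_neg (show x ≠ m2 by rw [hxz]; exact Ne.symm hm2z),
            if_neg (show x ≠ w by rw [hxz]; exact hzw)]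
          have hmle : t ≤ v x := by rw [hxz]; exact min_le_left _ _
          have hnn := hvnn x
          linarith
        · by_cases hxw : x = w
          · rw [hval, if_pos hxw, if_neg hxz,
              if_neg (show x ≠ m1 by rw [hxw]; exact Ne.symm hm1w),
              if_neg (show x ≠ m2 by rw [hxw]; exact Ne.symm hm2w)]
            have hmle : t ≤ v x := by rw [hxw]; exact min_le_right _ _
            have hnn := hvnn x
            linarith
          · rw [hval, if_neg hxz, if_neg hxw]
            have hnn := hvnn x
            have i1 : (0:ℝ) ≤ (if x = m1 then (1:ℝ) else 0) := by split <;> norm_num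
            have i2 : (0:ℝ) ≤ (if x = m2 then (1:ℝ) else 0) := by split <;> norm_num
            have hkey : (0:ℝ) ≤ t * (((if x = m1 then (1:ℝ) else 0)
                + (if x = m2 then (1:ℝ) else 0)) - ((0:ℝ) + (0:ℝ))) := by
              apply mul_nonneg ht.le
              linarith
            linarith
      · have := hxfer' (fun _ => 1)
        simp only [mul_one] at this
        rw [this, hvA.2.1]; ring
      · intro i
        have := hxfer' (fun x => (x.1 i : ℝ))
        rw [this, hvA.2.2.1 i]
        have : ((m1.1 i : ℝ) + (m2.1 i : ℝ)) - ((z.1 i : ℝ) + (w.1 i : ℝ)) = 0 := by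
          have h1 : m1.1 i = z.1 i + oh (u i) := rfl
          have h2 : m2.1 i = z.1 i + eh (u i) := rfl
          have h3 := eh_add_oh (u i)
          have h4 := hui i
          rw [h1, h2]
          push_cast
          have : oh (u i) + eh (u i) = w.1 i - z.1 i := by omega
          have := congrArg (fun m : ℤ => (m : ℝ)) this
          push_cast at this
          linarith
        rw [this, mul_zero, add_zero]
      · have := hxfer' (fun x => fqQ Q x.1)
        rw [this]
        have hid := exchange_identity Q hsym z.1 w.1
        have hsn := split_nonneg Q hsym hdd u
        have : (fqQ Q m1.1 + fqQ Q m2.1) - (fqQ Q z.1 + fqQ Q w.1)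
            = -2 * bQ Q (coeZR' d1) (coeZR' d2) := by
          have hm1e : m1.1 = z.1 + fun i => oh ((w.1 - z.1) i) := rfl
          have hm2e : m2.1 = z.1 + fun i => eh ((w.1 - z.1) i) := rfl
          rw [hm1e, hm2e]
          have : u = w.1 - z.1 := rfl
          rw [← this] at hid ⊢
          linarith [hid]
        rw [this]
        have hV' := hvA.2.2.2
        nlinarith [ht.le, hsn]
    -- psi strictly decreases: contradiction
    have hpsi := hxfer' (fun x => fqQ (1 : Matrix (Fin n) (Fin n) ℝ) x.1)
    have hdot : 1 ≤ ∑ i, ((oh (u i) : ℝ) * (eh (u i) : ℝ)) := dot_ge_one u i₀ hu₀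
    have hchange : (fqQ (1 : Matrix (Fin n) (Fin n) ℝ) m1.1
        + fqQ (1 : Matrix (Fin n) (Fin n) ℝ) m2.1)
        - (fqQ (1 : Matrix (Fin n) (Fin n) ℝ) z.1 + fqQ (1 : Matrix (Fin n) (Fin n) ℝ) w.1)
        = -2 * ∑ i, ((oh (u i) : ℝ) * (eh (u i) : ℝ)) := by
      have hid := exchange_identity (1 : Matrix (Fin n) (Fin n) ℝ) one_isSymm z.1 w.1
      have hbi := bI_eq (coeZR' d1) (coeZR' d2)
      have hm1e : m1.1 = z.1 + fun i => oh ((w.1 - z.1) i) := rfl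
      have hm2e : m2.1 = z.1 + fun i => eh ((w.1 - z.1) i) := rfl
      rw [hm1e, hm2e]
      have hueq : u = w.1 - z.1 := rfl
      rw [← hueq] at hid
      rw [hid]
      rw [hbi]
      simp only [coeZR']
      ring
    have hlt : ∑ x, v' x * fqQ (1 : Matrix (Fin n) (Fin n) ℝ) x.1
        < ∑ x, v x * fqQ (1 : Matrix (Fin n) (Fin n) ℝ) x.1 := by
      rw [hpsi, hchange]
      nlinarith [ht, hdot]
    have := hmin hv'A
    simp only [Set.mem_setOf_eq] at this
    exact absurd hlt (not_lt.mpr this)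
  -- build the localized finitely supported combination
  set F : (Fin n → ℤ) → ℝ := fun z => if h : z ∈ B then v ⟨z, h⟩ else 0 with hF
  have hFsupp : ∀ z, F z ≠ 0 → z ∈ B := by
    intro z hz
    by_contra h
    apply hz
    rw [hF]
    exact dif_neg h
  set l' : (Fin n → ℤ) →₀ ℝ := Finsupp.onFinset B F hFsupp with hl'
  have hl'app : ∀ z : {z // z ∈ B}, l' z.1 = v z := by
    intro z
    show F z.1 = v z
    rw [hF]
    exact dif_pos z.2
  have hl'sum : ∀ g : (Fin n → ℤ) → ℝ → ℝ, (∀ z, g z 0 = 0) →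
      l'.sum g = ∑ x : {z // z ∈ B}, g x.1 (v x) := by
    intro g hg
    rw [Finsupp.sum]
    rw [Finset.sum_subset (Finsupp.support_onFinset_subset) (by
      intro z _ hzn
      rw [Finsupp.notMem_support_iff.mp hzn, hg])]
    rw [Finset.univ_eq_attach, ← Finset.sum_attach B (fun z => g z (l' z))]
    apply Finset.sum_congr rfl
    intro x _
    rw [hl'app x]
  refine ⟨l', ?_, ?_, ?_, ?_, ?_⟩
  · intro z
    by_cases h : z ∈ B
    · show (0:ℝ) ≤ F z
      rw [show F z = v ⟨z, h⟩ from dif_pos h]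
      exact hvnn ⟨z, h⟩
    · show (0:ℝ) ≤ F z
      rw [show F z = 0 from dif_neg h]
  · intro z hz i
    have hzB : z ∈ B := Finsupp.support_onFinset_subset hz
    set x₀ : {z // z ∈ B} := ⟨z, hzB⟩ with hx₀
    have hvx₀ : v x₀ ≠ 0 := by
      have h := Finsupp.mem_support_iff.mp hz
      rwa [show l' z = v x₀ from hl'app x₀] at h
    have hvpos : 0 < v x₀ := (hvnn x₀).lt_of_ne (Ne.symm hvx₀)
    have hsum1 : ∑ x : {z // z ∈ B}, v x = 1 := hvA.2.1
    have hbar : ∑ x : {z // z ∈ B}, v x * (x.1 i : ℝ) = p i := hvA.2.2.1 i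
    have hsumite : ∑ x : {z // z ∈ B}, (if x = x₀ then v x₀ else 0) = v x₀ := by
      rw [Finset.sum_ite_eq' Finset.univ x₀ (fun _ => v x₀), if_pos (Finset.mem_univ x₀)]
    rw [abs_sub_lt_iff]
    constructor
    · -- p i - z i < 1
      have key : ∀ x : {z // z ∈ B}, v x * ((x.1 i : ℝ) - (z i : ℝ))
          ≤ v x - (if x = x₀ then v x₀ else 0) := by
        intro x
        by_cases hxx : x = x₀
        · rw [if_pos hxx, hxx]
          have : (x₀.1 i : ℝ) - (z i : ℝ) = 0 := by
            rw [hx₀]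
            simp
          rw [this, mul_zero, sub_self]
        · rw [if_neg hxx]
          by_cases hvx : v x = 0
          · rw [hvx]; simp
          · have hcl := hclaim x₀ x hvx₀ hvx i
            have hle : x.1 i - z i ≤ 1 := by
              have : (x.1 i - x₀.1 i).natAbs ≤ 1 := hcl
              have hxz : x₀.1 i = z i := rfl
              omega
            have hler : (x.1 i : ℝ) - (z i : ℝ) ≤ 1 := by
              exact_mod_cast hle
            nlinarith [hvnn x]
      have hs := Finset.sum_le_sum (fun x (_ : x ∈ Finset.univ) => key x)
      have hlhs : ∑ x : {z // z ∈ B}, v x * ((x.1 i : ℝ) - (z i : ℝ))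
          = p i - (z i : ℝ) := by
        have : ∑ x : {z // z ∈ B}, v x * ((x.1 i : ℝ) - (z i : ℝ))
            = (∑ x : {z // z ∈ B}, v x * (x.1 i : ℝ))
              - (∑ x : {z // z ∈ B}, v x) * (z i : ℝ) := by
          rw [Finset.sum_mul, ← Finset.sum_sub_distrib]
          apply Finset.sum_congr rfl
          intro x _; ring
        rw [this, hbar, hsum1, one_mul]
      have hrhs : ∑ x : {z // z ∈ B}, (v x - (if x = x₀ then v x₀ else 0))
          = 1 - v x₀ := by
        rw [Finset.sum_sub_distrib, hsum1, hsumite]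
      rw [hlhs, hrhs] at hs
      linarith
    · -- z i - p i < 1
      have key : ∀ x : {z // z ∈ B}, v x * ((z i : ℝ) - (x.1 i : ℝ))
          ≤ v x - (if x = x₀ then v x₀ else 0) := by
        intro x
        by_cases hxx : x = x₀
        · rw [if_pos hxx, hxx]
          have : (z i : ℝ) - (x₀.1 i : ℝ) = 0 := by
            rw [hx₀]
            simp
          rw [this, mul_zero, sub_self]
        · rw [if_neg hxx]
          by_cases hvx : v x = 0
          · rw [hvx]; simp
          · have hcl := hclaim x₀ x hvx₀ hvx i
            have hle : z i - x.1 i ≤ 1 := by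
              have : (x.1 i - x₀.1 i).natAbs ≤ 1 := hcl
              have hxz : x₀.1 i = z i := rfl
              omega
            have hler : (z i : ℝ) - (x.1 i : ℝ) ≤ 1 := by
              exact_mod_cast hle
            nlinarith [hvnn x]
      have hs := Finset.sum_le_sum (fun x (_ : x ∈ Finset.univ) => key x)
      have hlhs : ∑ x : {z // z ∈ B}, v x * ((z i : ℝ) - (x.1 i : ℝ))
          = (z i : ℝ) - p i := by
        have : ∑ x : {z // z ∈ B}, v x * ((z i : ℝ) - (x.1 i : ℝ))
            = (∑ x : {z // z ∈ B}, v x) * (z i : ℝ)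
              - (∑ x : {z // z ∈ B}, v x * (x.1 i : ℝ)) := by
          rw [Finset.sum_mul, ← Finset.sum_sub_distrib]
          apply Finset.sum_congr rfl
          intro x _; ring
        rw [this, hbar, hsum1, one_mul]
      have hrhs : ∑ x : {z // z ∈ B}, (v x - (if x = x₀ then v x₀ else 0))
          = 1 - v x₀ := by
        rw [Finset.sum_sub_distrib, hsum1, hsumite]
      rw [hlhs, hrhs] at hs
      linarith
  · rw [hl'sum (fun _ t => t) (fun _ => rfl)]
    exact hvA.2.1
  · intro i
    rw [hl'sum (fun z t => t * (z i : ℝ)) (fun _ => zero_mul _)]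
    exact hvA.2.2.1 i
  · rw [hl'sum (fun z t => t * fqQ Q z) (fun _ => zero_mul _)]
    exact hvA.2.2.2




def realToERealHom : ℝ →+ EReal := ⟨⟨Real.toEReal, rfl⟩, fun _ _ => EReal.coe_add _ _⟩

lemma coeSum {γ : Type*} (s : Finset γ) (g : γ → ℝ) :
    ((∑ z ∈ s, g z : ℝ) : EReal) = ∑ z ∈ s, ((g z : ℝ) : EReal) :=
  map_sum realToERealHom g s


set_option maxHeartbeats 1000000 in
theorem stmt12 {n : ℕ} (Q : Matrix (Fin n) (Fin n) ℝ) (hsym : Q.IsSymm)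
    (hdd : ∀ i, ∑ j ∈ Finset.univ.erase i, |Q i j| ≤ Q i i) :
    IntegrallyConvexFn
      (fun z : Fin n → ℤ => ((∑ i, ∑ j, (z i : ℝ) * Q i j * (z j : ℝ) : ℝ) : EReal)) := by
  classical
  intro x y a b ha hb hab
  set fE : (Fin n → ℤ) → EReal :=
    fun z : Fin n → ℤ => ((∑ i, ∑ j, (z i : ℝ) * Q i j * (z j : ℝ) : ℝ) : EReal) with hfE
  have hfeq : ∀ z, fE z = ((fqQ Q z : ℝ) : EReal) := fun z => rfl
  -- value representation of combination values
  have hval : ∀ l : (Fin n → ℤ) →₀ ℝ,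
      (l.sum fun z t => (t : EReal) * fE z) = ((l.sum fun z t => t * fqQ Q z : ℝ) : EReal) := by
    intro l
    rw [Finsupp.sum, Finsupp.sum, coeSum]
    apply Finset.sum_congr rfl
    intro z _
    rw [hfeq z, ← EReal.coe_mul]
  -- the defining sets
  set S : (Fin n → ℝ) → Set EReal := fun p => { v : EReal | ∃ l : (Fin n → ℤ) →₀ ℝ,
    (∀ z, 0 ≤ l z) ∧ (∀ z ∈ l.support, z ∈ IntNbhd p) ∧
    (l.sum fun _ t => t) = 1 ∧
    (l.sum fun z t => t • coeZR z) = p ∧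
    v = l.sum fun z t => (t : EReal) * fE z } with hS
  have hgdef : ∀ p, localConvexExt fE p = sInf (S p) := fun p => rfl
  -- elements of S p are nonnegative reals
  have hfnn : ∀ z : Fin n → ℤ, 0 ≤ fqQ Q z := fun z => qQ_nonneg Q hsym hdd _
  have helem : ∀ p, ∀ v ∈ S p, ∃ r : ℝ, v = (r : EReal) ∧ 0 ≤ r := by
    intro p v hv
    obtain ⟨l, hl0, _, _, _, hlv⟩ := hv
    refine ⟨l.sum fun z t => t * fqQ Q z, by rw [hlv, hval], ?_⟩
    apply Finset.sum_nonneg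
    intro z _
    exact mul_nonneg (hl0 z) (hfnn z)
  have hSnn : ∀ p, (0 : EReal) ≤ sInf (S p) := by
    intro p
    apply le_sInf
    intro v hv
    obtain ⟨r, hr, hr0⟩ := helem p v hv
    rw [hr]
    exact_mod_cast hr0
  -- apply-at-i helper for barycenters
  have happ : ∀ (w : (Fin n → ℤ) →₀ ℝ) (i : Fin n),
      (w.sum fun z t => t • coeZR z) i = w.sum fun z t => t * (z i : ℝ) := by
    intro w i
    rw [Finsupp.sum, Finset.sum_apply, Finsupp.sum]
    apply Finset.sum_congr rfl
    intro z _
    simp [coeZR]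
  rcases ha.eq_or_lt with rfl | ha'
  · have hb1 : b = 1 := by linarith
    subst hb1
    simp only [zero_smul, one_smul, zero_add, EReal.coe_zero, EReal.coe_one, zero_mul, one_mul]
    exact le_refl _
  rcases hb.eq_or_lt with rfl | hb'
  · have ha1 : a = 1 := by linarith
    subst ha1
    simp only [zero_smul, one_smul, add_zero, EReal.coe_zero, EReal.coe_one, zero_mul, one_mul]
    exact le_refl _
  -- both coefficients positive
  by_cases hSx : S x = ∅
  · rw [hgdef, hgdef x, hSx, sInf_empty]
    have h1 : (a : EReal) * ⊤ = ⊤ := EReal.mul_top_of_pos (by exact_mod_cast ha')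
    rw [h1]
    have h2 : (0 : EReal) ≤ (b : EReal) * localConvexExt fE y := by
      apply mul_nonneg
      · exact_mod_cast hb'.le
      · exact hSnn y
    rw [EReal.top_add_of_ne_bot (by intro h; rw [h] at h2; exact absurd h2 (by norm_num))]
    exact le_top
  by_cases hSy : S y = ∅
  · rw [hgdef, hgdef y, hSy, sInf_empty]
    have h1 : (b : EReal) * ⊤ = ⊤ := EReal.mul_top_of_pos (by exact_mod_cast hb')
    rw [h1]
    have h2 : (0 : EReal) ≤ (a : EReal) * localConvexExt fE x := by
      apply mul_nonneg
      · exact_mod_cast ha'.le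
      · exact hSnn x
    rw [EReal.add_top_of_ne_bot (by intro h; rw [h] at h2; exact absurd h2 (by norm_num))]
    exact le_top
  -- both sets nonempty
  have hSxne : (S x).Nonempty := Set.nonempty_iff_ne_empty.mpr hSx
  have hSyne : (S y).Nonempty := Set.nonempty_iff_ne_empty.mpr hSy
  have hxlow := hSnn x
  have hylow := hSnn y
  have hxnetop : sInf (S x) ≠ ⊤ := by
    obtain ⟨v, hv⟩ := hSxne
    obtain ⟨r, hr, _⟩ := helem x v hv
    intro h
    have := sInf_le hv
    rw [h, top_le_iff, hr] at this
    exact absurd this (EReal.coe_ne_top r)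
  have hynetop : sInf (S y) ≠ ⊤ := by
    obtain ⟨v, hv⟩ := hSyne
    obtain ⟨r, hr, _⟩ := helem y v hv
    intro h
    have := sInf_le hv
    rw [h, top_le_iff, hr] at this
    exact absurd this (EReal.coe_ne_top r)
  have hxnebot : sInf (S x) ≠ ⊥ := by
    intro h; rw [h] at hxlow; exact absurd hxlow (by norm_num)
  have hynebot : sInf (S y) ≠ ⊥ := by
    intro h; rw [h] at hylow; exact absurd hylow (by norm_num)
  set rx : ℝ := (sInf (S x)).toReal with hrx'
  set ry : ℝ := (sInf (S y)).toReal with hry'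
  have hrx : sInf (S x) = (rx : EReal) := (EReal.coe_toReal hxnetop hxnebot).symm
  have hry : sInf (S y) = (ry : EReal) := (EReal.coe_toReal hynetop hynebot).symm
  set p : Fin n → ℝ := a • x + b • y with hp
  -- main estimate
  have hmain : ∀ ε : ℝ, 0 < ε → sInf (S p) ≤ ((a * rx + b * ry + ε : ℝ) : EReal) := by
    intro ε hε
    obtain ⟨vx, hvxS, hvxlt⟩ := sInf_lt_iff.mp (show sInf (S x) < ((rx + ε : ℝ) : EReal) by
      rw [hrx]; exact_mod_cast (by linarith : rx < rx + ε))
    obtain ⟨vy, hvyS, hvylt⟩ := sInf_lt_iff.mp (show sInf (S y) < ((ry + ε : ℝ) : EReal) by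
      rw [hry]; exact_mod_cast (by linarith : ry < ry + ε))
    obtain ⟨l, hl0, _, hl1, hlx, hlv⟩ := hvxS
    obtain ⟨m, hm0, _, hm1, hmy, hmv⟩ := hvyS
    set rvx : ℝ := l.sum fun z t => t * fqQ Q z with hrvx
    set rvy : ℝ := m.sum fun z t => t * fqQ Q z with hrvy
    have hvxr : vx = (rvx : EReal) := by rw [hlv, hval]
    have hvyr : vy = (rvy : EReal) := by rw [hmv, hval]
    have hrvxlt : rvx < rx + ε := by
      rw [hvxr] at hvxlt; exact_mod_cast hvxlt
    have hrvylt : rvy < ry + ε := by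
      rw [hvyr] at hvylt; exact_mod_cast hvylt
    -- combine
    set c : (Fin n → ℤ) →₀ ℝ := a • l + b • m with hc
    have hcz : ∀ z, c z = a * l z + b * m z := by
      intro z
      rw [hc]
      simp [Finsupp.add_apply, Finsupp.smul_apply, smul_eq_mul]
    have hcsupp : c.support ⊆ l.support ∪ m.support := by
      intro z hz
      rw [Finsupp.mem_support_iff] at hz
      rw [Finset.mem_union, Finsupp.mem_support_iff, Finsupp.mem_support_iff]
      by_contra hcon
      push_neg at hcon
      rw [hcz, hcon.1, hcon.2] at hz
      simp at hz
    -- generic weighted-sum transfer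
    have hwsum : ∀ (w : (Fin n → ℤ) →₀ ℝ) (g : (Fin n → ℤ) → ℝ),
        w.support ⊆ l.support ∪ m.support →
        w.sum (fun z t => t * g z) = ∑ z ∈ l.support ∪ m.support, w z * g z := by
      intro w g hsub
      rw [Finsupp.sum]
      apply Finset.sum_subset hsub
      intro z _ hzn
      rw [Finsupp.notMem_support_iff.mp hzn, zero_mul]
    have hLsum : ∀ g : (Fin n → ℤ) → ℝ,
        c.sum (fun z t => t * g z)
          = a * l.sum (fun z t => t * g z) + b * m.sum (fun z t => t * g z) := by
      intro g
      rw [hwsum c g hcsupp, hwsum l g Finset.subset_union_left,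
        hwsum m g Finset.subset_union_right, Finset.mul_sum, Finset.mul_sum,
        ← Finset.sum_add_distrib]
      apply Finset.sum_congr rfl
      intro z _
      rw [hcz]
      ring
    have hc0 : ∀ z, 0 ≤ c z := by
      intro z
      rw [hcz]
      have := hl0 z; have := hm0 z
      positivity
    have hc1 : c.sum (fun _ t => t) = 1 := by
      have h := hLsum (fun _ => 1)
      simp only [mul_one] at h
      rw [h, hl1, hm1]
      linarith
    have hcbar : ∀ i, c.sum (fun z t => t * (z i : ℝ)) = p i := by
      intro i
      rw [hLsum (fun z => (z i : ℝ))]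
      have h1 : l.sum (fun z t => t * (z i : ℝ)) = x i := by
        rw [← happ l i, hlx]
      have h2 : m.sum (fun z t => t * (z i : ℝ)) = y i := by
        rw [← happ m i, hmy]
      rw [h1, h2, hp]
      simp [Pi.add_apply, Pi.smul_apply, smul_eq_mul]
    have hcval : c.sum (fun z t => t * fqQ Q z) = a * rvx + b * rvy := by
      rw [hLsum (fun z => fqQ Q z)]
    -- localize!
    obtain ⟨l', hl'0, hl'N, hl'1, hl'bar, hl'val⟩ :=
      localize Q hsym hdd p c hc0 hc1 hcbar
    have hl'valbound : l'.sum (fun z t => t * fqQ Q z) ≤ a * rx + b * ry + ε := by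
      rw [hcval] at hl'val
      nlinarith [hl'val, ha'.le, hb'.le]
    have hmem : (((l'.sum fun z t => t * fqQ Q z : ℝ)) : EReal) ∈ S p := by
      refine ⟨l', hl'0, ?_, hl'1, ?_, ?_⟩
      · intro z hz
        exact fun i => hl'N z hz i
      · funext i
        rw [happ l' i]
        exact hl'bar i
      · rw [hval]
    calc sInf (S p) ≤ (((l'.sum fun z t => t * fqQ Q z : ℝ)) : EReal) := sInf_le hmem
      _ ≤ ((a * rx + b * ry + ε : ℝ) : EReal) := by exact_mod_cast hl'valbound
  -- conclude
  have hfinal : sInf (S p) ≤ ((a * rx + b * ry : ℝ) : EReal) := by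
    have hpne : sInf (S p) ≠ ⊤ := by
      intro h
      have := hmain 1 one_pos
      rw [h, top_le_iff] at this
      exact absurd this (EReal.coe_ne_top _)
    have hpnb : sInf (S p) ≠ ⊥ := by
      intro h
      have := hSnn p
      rw [h] at this
      exact absurd this (by norm_num)
    set rp : ℝ := (sInf (S p)).toReal with hrp'
    have hrp : sInf (S p) = (rp : EReal) := (EReal.coe_toReal hpne hpnb).symm
    rw [hrp]
    have : rp ≤ a * rx + b * ry := by
      apply le_of_forall_pos_le_add
      intro ε hε
      have := hmain ε hε
      rw [hrp] at this
      exact_mod_cast this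
    exact_mod_cast this
  rw [hgdef, hgdef x, hgdef y, hrx, hry, ← EReal.coe_mul, ← EReal.coe_mul, ← EReal.coe_add]
  exact hfinal
end
end

section
/- The function f: ℤ² → ℝ defined by f(x₁,x₂) = |2x₁ − x₂| is convex-extensible (it is the restriction to ℤ² of the convex function |2x₁ − x₂| on ℝ²) but is not integrally convex. -/
noncomputable section

/-- The function in question. -/
private def F : (Fin 2 → ℤ) → EReal := fun z => (((|2 * z 0 - z 1| : ℤ) : ℝ) : EReal)

private lemma locExt_le_at_int (z0 : Fin 2 → ℤ) : localConvexExt F (coeZR z0) ≤ F z0 := by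
  apply sInf_le
  refine ⟨Finsupp.single z0 1, ?_, ?_, ?_, ?_, ?_⟩
  · intro z
    rw [Finsupp.single_apply]
    split <;> norm_num
  · intro z hz
    rw [Finsupp.support_single_ne_zero _ one_ne_zero] at hz
    simp only [Finset.mem_singleton] at hz
    subst hz
    intro i; simp [coeZR]
  · rw [Finsupp.sum_single_index]; rfl
  · rw [Finsupp.sum_single_index (by simp)]
    simp
  · rw [Finsupp.sum_single_index (by simp)]
    simp [F]

private lemma locExt_nonneg (x : Fin 2 → ℝ) : (0 : EReal) ≤ localConvexExt F x := by
  apply le_sInf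
  rintro v ⟨l, hpos, -, -, -, rfl⟩
  rw [Finsupp.sum]
  apply Finset.sum_nonneg
  intro z hz
  have h1 : (0:ℝ) ≤ l z := hpos z
  have h2 : (0:ℝ) ≤ ((|2 * z 0 - z 1| : ℤ) : ℝ) := by positivity
  show (0:EReal) ≤ (l z : EReal) * F z
  rw [F, ← EReal.coe_mul]
  exact_mod_cast mul_nonneg h1 h2

private def mid : Fin 2 → ℝ := ![1/2, 1]

private lemma locExt_mid_ge : (1 : EReal) ≤ localConvexExt F mid := by
  apply le_sInf
  rintro v ⟨l, hpos, hsupp, hsum1, -, rfl⟩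
  have hF : ∀ z ∈ l.support, F z = ((1:ℝ) : EReal) := by
    intro z hz
    have hnb := hsupp z hz
    have h0 := abs_lt.1 (hnb 0)
    have h1 := abs_lt.1 (hnb 1)
    simp only [mid, Matrix.cons_val_zero, Matrix.cons_val_one, Matrix.head_cons] at h0 h1
    have hz1 : z 1 = 1 := by
      have hl : (0:ℝ) < (z 1 : ℝ) := by linarith
      have hu : ((z 1 : ℝ)) < 2 := by linarith
      have : (0:ℤ) < z 1 := by exact_mod_cast hl
      have : z 1 < 2 := by exact_mod_cast hu
      omega
    have hz0l : (0:ℤ) ≤ z 0 := by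
      have : (-1/2 : ℝ) < (z 0 : ℝ) := by linarith
      have : (-1:ℤ) < z 0 := by exact_mod_cast (by linarith : (-1:ℝ) < (z 0:ℝ))
      omega
    have hz0u : z 0 ≤ 1 := by
      have : ((z 0 : ℝ)) < 2 := by linarith
      have : z 0 < 2 := by exact_mod_cast this
      omega
    interval_cases h : z 0 <;> simp [F, hz1, h]
  have : (l.sum fun z a => (a : EReal) * F z) = ((l.sum fun _ a => a : ℝ) : EReal) := by
    rw [Finsupp.sum, Finsupp.sum]
    have hc : ((∑ a ∈ l.support, l a : ℝ) : EReal) = ∑ a ∈ l.support, ((l a : ℝ) : EReal) :=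
      map_sum (⟨⟨((↑) : ℝ → EReal), EReal.coe_zero⟩, EReal.coe_add⟩ : ℝ →+ EReal) _ _
    rw [hc]
    apply Finset.sum_congr rfl
    intro z hz
    simp [hF z hz]
  rw [this, hsum1]
  norm_num

theorem stmt13 :
    ConvexOn ℝ Set.univ (fun x : Fin 2 → ℝ => |2 * x 0 - x 1|) ∧
    (∀ z : Fin 2 → ℤ,
      (fun x : Fin 2 → ℝ => |2 * x 0 - x 1|) (coeZR z) = ((|2 * z 0 - z 1| : ℤ) : ℝ)) ∧
    ¬ IntegrallyConvexFn (fun z : Fin 2 → ℤ => (((|2 * z 0 - z 1| : ℤ) : ℝ) : EReal)) := by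
  refine ⟨⟨convex_univ, ?_⟩, ?_, ?_⟩
  · intro x _ y _ a b ha hb hab
    simp only [Pi.add_apply, Pi.smul_apply, smul_eq_mul]
    calc |2*(a*x 0 + b*y 0) - (a*x 1 + b*y 1)|
        = |a*(2*x 0 - x 1) + b*(2*y 0 - y 1)| := by congr 1; ring
      _ ≤ |a*(2*x 0 - x 1)| + |b*(2*y 0 - y 1)| := abs_add_le _ _
      _ = a*|2*x 0 - x 1| + b*|2*y 0 - y 1| := by
          rw [abs_mul, abs_mul, abs_of_nonneg ha, abs_of_nonneg hb]
  · intro z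
    simp only [coeZR]
    push_cast
    ring_nf
  · intro h
    have key := h (coeZR ![0, 0]) (coeZR ![1, 2]) (1/2) (1/2) (by norm_num) (by norm_num)
      (by norm_num)
    have hmid : (1/2 : ℝ) • coeZR ![0, 0] + (1/2 : ℝ) • coeZR ![1, 2] = mid := by
      funext i
      fin_cases i <;> simp [coeZR, mid]
    have hx : localConvexExt F (coeZR ![0, 0]) = 0 := by
      refine le_antisymm ?_ (locExt_nonneg _)
      have := locExt_le_at_int ![0, 0]
      simpa [F] using this
    have hy : localConvexExt F (coeZR ![1, 2]) = 0 := by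
      refine le_antisymm ?_ (locExt_nonneg _)
      have := locExt_le_at_int ![1, 2]
      simpa [F] using this
    have hFeq : (fun z : Fin 2 → ℤ => (((|2 * z 0 - z 1| : ℤ) : ℝ) : EReal)) = F := rfl
    rw [hFeq, hmid, hx, hy] at key
    have h1 := locExt_mid_ge
    have : (1:EReal) ≤ ((1/2:ℝ):EReal) * 0 + ((1/2:ℝ):EReal) * 0 := le_trans h1 key
    simp at this
    exact absurd this (by norm_num)
end
end

section
/- Let f: ℤⁿ → ℝ ∪ {+∞} be an integrally convex function and x* ∈ dom f. Then x* is a global minimizer of f if and only if f(x*) ≤ f(x* + d) for all d ∈ {−1, 0, +1}ⁿ. -/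
noncomputable section

lemma lce_le_apply {n : ℕ} (f : (Fin n → ℤ) → EReal) (z : Fin n → ℤ) :
    localConvexExt f (coeZR z) ≤ f z := by
  apply sInf_le
  refine ⟨Finsupp.single z 1, ?_, ?_, ?_, ?_, ?_⟩
  · intro w
    by_cases h : z = w <;> simp [Finsupp.single_apply, h]
  · intro w hw
    have hwz : w = z := by
      have := Finsupp.support_single_subset hw
      simpa using this
    subst hwz
    intro i; simp [coeZR]
  · rw [Finsupp.sum_single_index rfl]
  · rw [Finsupp.sum_single_index (zero_smul ℝ (coeZR z)), one_smul]
  · rw [Finsupp.sum_single_index (by simp)]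
    simp

lemma lce_ge {n : ℕ} (f : (Fin n → ℤ) → EReal) (p : Fin n → ℝ) (F : ℝ)
    (hc : ∀ z ∈ IntNbhd p, (F : EReal) ≤ f z) :
    (F : EReal) ≤ localConvexExt f p := by
  apply le_sInf
  rintro v ⟨l, hpos, hsupp, hsum1, -, rfl⟩
  have hsum1' : ∑ z ∈ l.support, l z = 1 := hsum1
  calc (F : EReal) = ((∑ z ∈ l.support, l z * F : ℝ) : EReal) := by
        rw [← Finset.sum_mul, hsum1', one_mul]
    _ = ∑ z ∈ l.support, ((l z * F : ℝ) : EReal) :=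
        map_sum (⟨⟨Real.toEReal, EReal.coe_zero⟩, EReal.coe_add⟩ : ℝ →+ EReal) _ _
    _ ≤ ∑ z ∈ l.support, (l z : EReal) * f z := by
        refine Finset.sum_le_sum fun z hz => ?_
        rw [EReal.coe_mul]
        exact mul_le_mul_of_nonneg_left (hc z (hsupp z hz)) (by exact_mod_cast hpos z)
    _ = l.sum fun z a => (a : EReal) * f z := rfl

theorem stmt14 {n : ℕ} (f : (Fin n → ℤ) → EReal) (hbot : ∀ z, f z ≠ ⊥)
    (hf : IntegrallyConvexFn f) (x : Fin n → ℤ) (hx : f x ≠ ⊤) :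
    (∀ y : Fin n → ℤ, f x ≤ f y) ↔
      ∀ d : Fin n → ℤ, (∀ i, d i = -1 ∨ d i = 0 ∨ d i = 1) → f x ≤ f (x + d) := by
  constructor
  · intro h d _; exact h _
  · intro hloc y
    by_contra hlt
    push_neg at hlt
    have hytop : f y ≠ ⊤ := fun h => absurd (h ▸ hlt) (not_lt.2 le_top)
    obtain ⟨F, hF⟩ : ∃ F : ℝ, f x = (F : EReal) := ⟨(f x).toReal, (EReal.coe_toReal hx (hbot x)).symm⟩
    obtain ⟨G, hG⟩ : ∃ G : ℝ, f y = (G : EReal) := ⟨(f y).toReal, (EReal.coe_toReal hytop (hbot y)).symm⟩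
    have hGF : G < F := by rw [hF, hG] at hlt; exact_mod_cast hlt
    set S : ℤ := ∑ i, |y i - x i| with hSdef
    have hS0 : 0 ≤ S := Finset.sum_nonneg fun i _ => abs_nonneg _
    have hSR : (0:ℝ) ≤ (S:ℝ) := by exact_mod_cast hS0
    set b : ℝ := 1 / ((S:ℝ) + 1) with hbdef
    have hb0 : 0 < b := by positivity
    have hb1 : b ≤ 1 := by
      rw [hbdef, div_le_one (by linarith)]; linarith
    set a : ℝ := 1 - b with hadef
    have ha0 : 0 ≤ a := by linarith
    have hab : a + b = 1 := by ring
    set p : Fin n → ℝ := a • coeZR x + b • coeZR y with hpdef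
    -- every integer point in the neighborhood of p is of the form x + d
    have key : ∀ z ∈ IntNbhd p, (F : EReal) ≤ f z := by
      intro z hz
      have hd : ∀ i, (z - x) i = -1 ∨ (z - x) i = 0 ∨ (z - x) i = 1 := by
        intro i
        have h1 : |p i - (z i : ℝ)| < 1 := hz i
        have hpi : p i = a * (x i : ℝ) + b * (y i : ℝ) := rfl
        have habs : |(y i : ℝ) - (x i : ℝ)| ≤ (S:ℝ) := by
          have : |y i - x i| ≤ S :=
            Finset.single_le_sum (f := fun j => |y j - x j|) (fun j _ => abs_nonneg _)
              (Finset.mem_univ i)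
          exact_mod_cast this
        have h2 : |(x i : ℝ) - p i| < 1 := by
          have : (x i : ℝ) - p i = b * ((x i : ℝ) - (y i : ℝ)) := by rw [hpi]; ring
          rw [this, abs_mul, abs_of_pos hb0]
          have : b * |(x i : ℝ) - (y i : ℝ)| ≤ b * (S:ℝ) := by
            apply mul_le_mul_of_nonneg_left _ hb0.le
            rwa [abs_sub_comm]
          have hlt1 : b * (S:ℝ) < 1 := by
            rw [hbdef]
            rw [div_mul_eq_mul_div, div_lt_one (by linarith)]
            linarith
          linarith
        have h3 : |(x i : ℝ) - (z i : ℝ)| < 2 := by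
          calc |(x i : ℝ) - (z i : ℝ)| ≤ |(x i : ℝ) - p i| + |p i - (z i : ℝ)| := by
                have := abs_sub_le (x i : ℝ) (p i) (z i : ℝ)
                simpa using this
            _ < 2 := by linarith
        have h4 : |x i - z i| < 2 := by exact_mod_cast h3
        rw [abs_lt] at h4
        simp only [Pi.sub_apply]
        omega
      have hz' : z = x + (z - x) := by ring
      rw [← hF, hz']
      exact hloc _ hd
    have h1 : (F : EReal) ≤ localConvexExt f p := lce_ge f p F key
    have h2 : localConvexExt f p ≤ (a : EReal) * localConvexExt f (coeZR x) +
        (b : EReal) * localConvexExt f (coeZR y) := hf _ _ a b ha0 hb0.le hab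
    have h3 : (a : EReal) * localConvexExt f (coeZR x) + (b : EReal) * localConvexExt f (coeZR y)
        ≤ (a : EReal) * (F : EReal) + (b : EReal) * (G : EReal) := by
      refine add_le_add ?_ ?_
      · exact mul_le_mul_of_nonneg_left (hF ▸ lce_le_apply f x) (by exact_mod_cast ha0)
      · exact mul_le_mul_of_nonneg_left (hG ▸ lce_le_apply f y) (by exact_mod_cast hb0.le)
    have h4 : (a : EReal) * (F : EReal) + (b : EReal) * (G : EReal) < (F : EReal) := by
      have heq : a * F + b * G = F - b * (F - G) := by rw [hadef]; ring
      have hpos' : 0 < b * (F - G) := mul_pos hb0 (sub_pos.2 hGF)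
      have : a * F + b * G < F := by rw [heq]; linarith
      calc (a : EReal) * (F : EReal) + (b : EReal) * (G : EReal)
          = ((a * F + b * G : ℝ) : EReal) := by rw [← EReal.coe_mul, ← EReal.coe_mul, ← EReal.coe_add]
        _ < (F : EReal) := by exact_mod_cast this
    exact absurd (h1.trans (h2.trans h3)) (not_le.2 h4)
end
end

section
/- Box-barrier property: Let f: ℤⁿ → ℝ ∪ {+∞} be integrally convex, p ∈ (ℤ ∪ {−∞})ⁿ, q ∈ (ℤ ∪ {+∞})ⁿ with p ≤ q. Let S = {x ∈ ℤⁿ : pᵢ < xᵢ < qᵢ ∀i} and let W be the set of integer points x with p ≤ x ≤ q having xᵢ = pᵢ or xᵢ = qᵢ for some i. If x̂ ∈ S ∩ dom f satisfies f(x̂) ≤ f(y) for all y ∈ W, then f(x̂) ≤ f(z) for all z ∈ ℤⁿ \ S. -/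
noncomputable section

lemma ext_le_at_int {n : ℕ} (f : (Fin n → ℤ) → EReal) (x : Fin n → ℤ) :
    localConvexExt f (coeZR x) ≤ f x := by
  classical
  apply sInf_le
  refine ⟨Finsupp.single x 1, ?_, ?_, ?_, ?_, ?_⟩
  · intro w
    rw [Finsupp.single_apply]
    split <;> norm_num
  · intro w hw
    rw [Finsupp.support_single_ne_zero _ one_ne_zero, Finset.mem_singleton] at hw
    subst hw
    intro i; simp [IntNbhd, coeZR]
  · rw [Finsupp.sum_single_index rfl]
  · rw [Finsupp.sum_single_index (by simp)]; simp
  · rw [Finsupp.sum_single_index (by simp)]; simp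

lemma ext_ge {n : ℕ} (f : (Fin n → ℤ) → EReal) (y : Fin n → ℝ) (c : ℝ)
    (h : ∀ w ∈ IntNbhd y, (c : EReal) ≤ f w) :
    (c : EReal) ≤ localConvexExt f y := by
  classical
  apply le_sInf
  rintro v ⟨l, hpos, hsupp, hsum1, -, hv⟩
  have hcoe : (c : EReal) = ∑ w ∈ l.support, ((l w * c : ℝ) : EReal) := by
    have hm := map_sum (⟨⟨Real.toEReal, EReal.coe_zero⟩, EReal.coe_add⟩ : ℝ →+ EReal)
      (fun w => l w * c) l.support
    simp only [AddMonoidHom.coe_mk, ZeroHom.coe_mk] at hm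
    rw [← hm, ← Finset.sum_mul]
    have h1 : ∑ w ∈ l.support, l w = 1 := hsum1
    rw [h1, one_mul]
  rw [hv, hcoe, Finsupp.sum]
  apply Finset.sum_le_sum
  intro w hw
  rw [EReal.coe_mul]
  exact mul_le_mul_of_nonneg_left (h w (hsupp w hw)) (EReal.coe_nonneg.mpr (hpos w))

theorem stmt15 {n : ℕ} (f : (Fin n → ℤ) → EReal) (hbot : ∀ z, f z ≠ ⊥)
    (hf : IntegrallyConvexFn f)
    (p : Fin n → WithBot ℤ) (q : Fin n → WithTop ℤ)
    (hpq : ∀ i, ∀ a b : ℤ, p i = (a : WithBot ℤ) → q i = (b : WithTop ℤ) → a ≤ b)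
    (S : Set (Fin n → ℤ))
    (hS : S = {x | ∀ i, p i < ((x i : ℤ) : WithBot ℤ) ∧ ((x i : ℤ) : WithTop ℤ) < q i})
    (W : Set (Fin n → ℤ))
    (hW : W = {x | (∀ i, p i ≤ ((x i : ℤ) : WithBot ℤ) ∧ ((x i : ℤ) : WithTop ℤ) ≤ q i) ∧
        ∃ i, ((x i : ℤ) : WithBot ℤ) = p i ∨ ((x i : ℤ) : WithTop ℤ) = q i})
    (xh : Fin n → ℤ) (hx1 : xh ∈ S) (hx2 : f xh ≠ ⊤)
    (hmin : ∀ y ∈ W, f xh ≤ f y) :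
    ∀ z : Fin n → ℤ, z ∉ S → f xh ≤ f z := by
  classical
  intro z hz
  by_cases hzt : f z = ⊤
  · rw [hzt]; exact le_top
  -- real values
  set c : ℝ := (f xh).toReal with hcdef
  have hcf : (c : EReal) = f xh := EReal.coe_toReal hx2 (hbot xh)
  set d : ℝ := (f z).toReal with hddef
  have hdf : (d : EReal) = f z := EReal.coe_toReal hzt (hbot z)
  rw [hS] at hx1
  have hx1' : ∀ i, p i < ((xh i : ℤ) : WithBot ℤ) ∧ ((xh i : ℤ) : WithTop ℤ) < q i := hx1
  set X : Fin n → ℝ := coeZR xh with hX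
  set Z : Fin n → ℝ := coeZR z with hZ
  have hXj : ∀ j, X j = (xh j : ℝ) := fun j => rfl
  have hZj : ∀ j, Z j = (z j : ℝ) := fun j => rfl
  -- constraint predicates
  set Pc : Fin n → Prop := fun j => ∃ a : ℤ, p j = (a : WithBot ℤ) ∧ z j ≤ a with hPc
  set Qc : Fin n → Prop := fun j => ∃ b : ℤ, q j = (b : WithTop ℤ) ∧ b ≤ z j with hQc
  -- exit times
  have key : ∀ j, ∃ tj : ℝ, (Pc j ∨ Qc j) →
      (0 < tj ∧ tj ≤ 1 ∧ ∃ w : ℤ, X j + tj * (Z j - X j) = (w : ℝ) ∧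
        ((p j = ((w : ℤ) : WithBot ℤ) ∧
            ∀ s : ℝ, 0 ≤ s → s ≤ tj → (w : ℝ) ≤ X j + s * (Z j - X j)) ∨
         (q j = ((w : ℤ) : WithTop ℤ) ∧
            ∀ s : ℝ, 0 ≤ s → s ≤ tj → X j + s * (Z j - X j) ≤ (w : ℝ)))) := by
    intro j
    by_cases hc : Pc j ∨ Qc j
    · rcases hc with ⟨a, hpa, hza⟩ | ⟨b, hqb, hbz⟩
      · -- lower wall: z j ≤ a < xh j
        have hax : a < xh j := by
          have := (hx1' j).1
          rw [hpa] at this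
          exact_mod_cast this
        have hden : Z j - X j < 0 := by
          rw [hXj, hZj]
          have : (z j : ℝ) ≤ (a : ℝ) := by exact_mod_cast hza
          have h2 : (a : ℝ) < (xh j : ℝ) := by exact_mod_cast hax
          linarith
        have hdenz : Z j - X j ≠ 0 := ne_of_lt hden
        refine ⟨((a : ℝ) - X j) / (Z j - X j), fun _ => ?_⟩
        have heq : ((a : ℝ) - X j) / (Z j - X j) * (Z j - X j) = (a : ℝ) - X j :=
          div_mul_cancel₀ _ hdenz
        have hnum : (a : ℝ) - X j < 0 := by
          rw [hXj]; have : (a : ℝ) < (xh j : ℝ) := by exact_mod_cast hax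
          linarith
        have hnd : Z j - X j ≤ (a : ℝ) - X j := by
          rw [hZj]
          have : (z j : ℝ) ≤ (a : ℝ) := by exact_mod_cast hza
          linarith
        refine ⟨div_pos_of_neg_of_neg hnum hden, ?_, a, by linarith [heq], Or.inl ⟨hpa, ?_⟩⟩
        · rw [div_le_one_iff]
          exact Or.inr (Or.inr ⟨hden, hnd⟩)
        · intro s hs0 hs1
          nlinarith [mul_le_mul_of_nonpos_right hs1 (le_of_lt hden)]
      · -- upper wall: xh j < b ≤ z j
        have hax : xh j < b := by
          have := (hx1' j).2
          rw [hqb] at this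
          exact_mod_cast this
        have hden : 0 < Z j - X j := by
          rw [hXj, hZj]
          have : (b : ℝ) ≤ (z j : ℝ) := by exact_mod_cast hbz
          have h2 : (xh j : ℝ) < (b : ℝ) := by exact_mod_cast hax
          linarith
        have hdenz : Z j - X j ≠ 0 := ne_of_gt hden
        refine ⟨((b : ℝ) - X j) / (Z j - X j), fun _ => ?_⟩
        have heq : ((b : ℝ) - X j) / (Z j - X j) * (Z j - X j) = (b : ℝ) - X j :=
          div_mul_cancel₀ _ hdenz
        have hnum : 0 < (b : ℝ) - X j := by
          rw [hXj]; have : (xh j : ℝ) < (b : ℝ) := by exact_mod_cast hax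
          linarith
        have hnd : (b : ℝ) - X j ≤ Z j - X j := by
          rw [hZj]
          have : (b : ℝ) ≤ (z j : ℝ) := by exact_mod_cast hbz
          linarith
        refine ⟨by positivity, div_le_one_of_le₀ hnd (le_of_lt hden), b,
          by linarith [heq], Or.inr ⟨hqb, ?_⟩⟩
        intro s hs0 hs1
        nlinarith [mul_le_mul_of_nonneg_right hs1 (le_of_lt hden)]
    · exact ⟨0, fun h => absurd h hc⟩
  choose tf htf using key
  -- the set of constrained coordinates
  set J : Finset (Fin n) := Finset.univ.filter (fun j => Pc j ∨ Qc j) with hJ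
  have hJne : J.Nonempty := by
    rw [hS] at hz
    simp only [Set.mem_setOf_eq, not_forall] at hz
    obtain ⟨i, hi⟩ := hz
    rw [not_and_or] at hi
    refine ⟨i, ?_⟩
    rw [hJ, Finset.mem_filter]
    refine ⟨Finset.mem_univ i, ?_⟩
    rcases hi with hi | hi
    · left
      rw [not_lt] at hi
      cases hp : p i with
      | bot => rw [hp] at hi; exact absurd hi (by simp)
      | coe a =>
        refine ⟨a, hp, ?_⟩
        rw [hp] at hi
        exact_mod_cast hi
    · right
      rw [not_lt] at hi
      cases hq : q i with
      | top => rw [hq] at hi; exact absurd hi (by simp)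
      | coe b =>
        refine ⟨b, hq, ?_⟩
        rw [hq] at hi
        exact_mod_cast hi
  set t : ℝ := (J.image tf).min' (hJne.image tf) with ht
  have htmem := (J.image tf).min'_mem (hJne.image tf)
  rw [Finset.mem_image] at htmem
  obtain ⟨j0, hj0J, hj0t⟩ := htmem
  have hj0c : Pc j0 ∨ Qc j0 := (Finset.mem_filter.mp hj0J).2
  obtain ⟨htf0pos, htf0le, w0, hw0eq, hw0⟩ := htf j0 hj0c
  have htpos : 0 < t := by rw [ht, ← hj0t]; exact htf0pos
  have htle1 : t ≤ 1 := by rw [ht, ← hj0t]; exact htf0le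
  have htle : ∀ j ∈ J, t ≤ tf j := fun j hj =>
    (J.image tf).min'_le _ (Finset.mem_image_of_mem tf hj)
  -- the boundary point
  set y : Fin n → ℝ := fun j => X j + t * (Z j - X j) with hy
  -- lower bounds
  have hL : ∀ j, ∀ a : ℤ, p j = (a : WithBot ℤ) → (a : ℝ) ≤ y j := by
    intro j a hpa
    by_cases hza : z j ≤ a
    · have hjc : Pc j ∨ Qc j := Or.inl ⟨a, hpa, hza⟩
      have hjJ : j ∈ J := by rw [hJ, Finset.mem_filter]; exact ⟨Finset.mem_univ j, hjc⟩
      obtain ⟨hp0, hp1, w, hweq, hw⟩ := htf j hjc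
      rcases hw with ⟨hpw, hmono⟩ | ⟨hqw, _⟩
      · have haw : a = w := by
          rw [hpa] at hpw; exact_mod_cast hpw
        rw [haw]
        exact hmono t (le_of_lt htpos) (htle j hjJ)
      · -- contradiction: q-side wall but z j ≤ a < xh j
        exfalso
        have hax : a < xh j := by
          have := (hx1' j).1
          rw [hpa] at this; exact_mod_cast this
        have hxw : xh j < w := by
          have := (hx1' j).2
          rw [hqw] at this; exact_mod_cast this
        -- X j + tf j * (Z j - X j) = w > X j, tf j > 0 so Z j > X j, but z j ≤ a < xh j
        have hZX : Z j - X j < 0 := by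
          rw [hXj, hZj]
          have h1 : (z j : ℝ) ≤ (a : ℝ) := by exact_mod_cast hza
          have h2 : (a : ℝ) < (xh j : ℝ) := by exact_mod_cast hax
          linarith
        have hwX : (X j : ℝ) < (w : ℝ) := by
          rw [hXj]; exact_mod_cast hxw
        nlinarith [mul_pos hp0 (neg_pos.mpr hZX)]
    · -- a < z j : both endpoints above the wall
      push_neg at hza
      have hax : a < xh j := by
        have := (hx1' j).1
        rw [hpa] at this; exact_mod_cast this
      have h1 : (a : ℝ) ≤ X j := by rw [hXj]; exact_mod_cast le_of_lt hax
      have h2 : (a : ℝ) ≤ Z j := by rw [hZj]; exact_mod_cast le_of_lt hza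
      show (a : ℝ) ≤ X j + t * (Z j - X j)
      nlinarith [mul_nonneg (le_of_lt htpos) (by linarith : (0:ℝ) ≤ Z j - (a:ℝ)),
        mul_nonneg (by linarith : (0:ℝ) ≤ 1 - t) (by linarith : (0:ℝ) ≤ X j - (a:ℝ))]
  have hU : ∀ j, ∀ b : ℤ, q j = (b : WithTop ℤ) → y j ≤ (b : ℝ) := by
    intro j b hqb
    by_cases hbz : b ≤ z j
    · have hjc : Pc j ∨ Qc j := Or.inr ⟨b, hqb, hbz⟩
      have hjJ : j ∈ J := by rw [hJ, Finset.mem_filter]; exact ⟨Finset.mem_univ j, hjc⟩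
      obtain ⟨hp0, hp1, w, hweq, hw⟩ := htf j hjc
      rcases hw with ⟨hpw, _⟩ | ⟨hqw, hmono⟩
      · exfalso
        have hbx : xh j < b := by
          have := (hx1' j).2
          rw [hqb] at this; exact_mod_cast this
        have hwx : w < xh j := by
          have := (hx1' j).1
          rw [hpw] at this; exact_mod_cast this
        have hZX : 0 < Z j - X j := by
          rw [hXj, hZj]
          have h1 : (b : ℝ) ≤ (z j : ℝ) := by exact_mod_cast hbz
          have h2 : (xh j : ℝ) < (b : ℝ) := by exact_mod_cast hbx
          linarith
        have hwX : (w : ℝ) < X j := by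
          rw [hXj]; exact_mod_cast hwx
        nlinarith [mul_pos hp0 hZX]
      · have hbw : b = w := by
          rw [hqb] at hqw; exact_mod_cast hqw
        rw [hbw]
        exact hmono t (le_of_lt htpos) (htle j hjJ)
    · push_neg at hbz
      have hbx : xh j < b := by
        have := (hx1' j).2
        rw [hqb] at this; exact_mod_cast this
      have h1 : X j ≤ (b : ℝ) := by rw [hXj]; exact_mod_cast le_of_lt hbx
      have h2 : Z j ≤ (b : ℝ) := by rw [hZj]; exact_mod_cast le_of_lt hbz
      show X j + t * (Z j - X j) ≤ (b : ℝ)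
      nlinarith [mul_nonneg (le_of_lt htpos) (by linarith : (0:ℝ) ≤ (b:ℝ) - Z j),
        mul_nonneg (by linarith : (0:ℝ) ≤ 1 - t) (by linarith : (0:ℝ) ≤ (b:ℝ) - X j)]
  -- the wall coordinate
  have hwall : y j0 = (w0 : ℝ) ∧
      (p j0 = ((w0 : ℤ) : WithBot ℤ) ∨ q j0 = ((w0 : ℤ) : WithTop ℤ)) := by
    constructor
    · show X j0 + t * (Z j0 - X j0) = (w0 : ℝ)
      rw [ht, ← hj0t]; exact hw0eq
    · rcases hw0 with ⟨h, _⟩ | ⟨h, _⟩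
      · exact Or.inl h
      · exact Or.inr h
  -- neighbors of y lie in W
  have hnbhd : ∀ v ∈ IntNbhd y, v ∈ W := by
    intro v hv
    rw [hW]
    constructor
    · intro j
      constructor
      · cases hp : p j with
        | bot => exact bot_le
        | coe a =>
          have hay : (a : ℝ) ≤ y j := hL j a hp
          have habs := hv j
          rw [abs_lt] at habs
          have : (a : ℝ) - 1 < (v j : ℝ) := by linarith [habs.2]
          have : a ≤ v j := by
            have h2 : (a : ℝ) < (v j : ℝ) + 1 := by linarith
            exact_mod_cast Int.lt_add_one_iff.mp (by exact_mod_cast h2)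
          exact_mod_cast WithBot.coe_le_coe.mpr this
      · cases hq : q j with
        | top => exact le_top
        | coe b =>
          have hby : y j ≤ (b : ℝ) := hU j b hq
          have habs := hv j
          rw [abs_lt] at habs
          have : (v j : ℝ) < (b : ℝ) + 1 := by linarith [habs.1]
          have : v j ≤ b := Int.lt_add_one_iff.mp (by exact_mod_cast this)
          exact_mod_cast WithTop.coe_le_coe.mpr this
    · refine ⟨j0, ?_⟩
      have habs := hv j0
      rw [hwall.1, abs_lt] at habs
      have hveq : v j0 = w0 := by
        have h1 : (w0 : ℝ) - (v j0 : ℝ) < 1 := habs.2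
        have h2 : -(1 : ℝ) < (w0 : ℝ) - (v j0 : ℝ) := habs.1
        have h1' : w0 - v j0 < 1 := by exact_mod_cast h1
        have h2' : -1 < w0 - v j0 := by exact_mod_cast h2
        omega
      rcases hwall.2 with h | h
      · exact Or.inl (by rw [hveq, h])
      · exact Or.inr (by rw [hveq, h])
  -- lower bound on the extension at y
  have hge : (c : EReal) ≤ localConvexExt f y := by
    apply ext_ge
    intro v hv
    rw [hcf]
    exact hmin v (hnbhd v hv)
  -- convexity
  have hyc : y = (1 - t) • X + t • Z := by
    funext j
    simp only [Pi.add_apply, Pi.smul_apply, smul_eq_mul]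
    rw [hy]
    ring
  have hconv := hf X Z (1 - t) t (by linarith) (le_of_lt htpos) (by ring)
  rw [← hyc] at hconv
  have hub : localConvexExt f y ≤ ((1 - t : ℝ) : EReal) * (c : EReal) + (t : EReal) * (d : EReal) := by
    refine le_trans hconv (add_le_add ?_ ?_)
    · refine mul_le_mul_of_nonneg_left ?_ (EReal.coe_nonneg.mpr (by linarith))
      rw [hcf]
      exact ext_le_at_int f xh
    · refine mul_le_mul_of_nonneg_left ?_ (EReal.coe_nonneg.mpr (le_of_lt htpos))
      rw [hdf]
      exact ext_le_at_int f z
  have hfin : (c : EReal) ≤ (((1 - t) * c + t * d : ℝ) : EReal) := by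
    rw [EReal.coe_add, EReal.coe_mul, EReal.coe_mul]
    exact le_trans hge hub
  have hcd : c ≤ (1 - t) * c + t * d := EReal.coe_le_coe_iff.mp hfin
  have : c ≤ d := by nlinarith
  rw [← hcf, ← hdf]
  exact_mod_cast EReal.coe_le_coe_iff.mpr this
end
end

section
/- If f: ℤⁿ → ℝ ∪ {+∞} is an integrally convex function that attains a finite minimum, then argmin f is an integrally convex set. -/
noncomputable section

private lemma coe_fsum {α : Type*} (s : Finset α) (g : α → ℝ) :
    ((∑ i ∈ s, g i : ℝ) : EReal) = ∑ i ∈ s, ((g i : ℝ) : EReal) :=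
  map_sum (⟨⟨(fun r : ℝ => (r : EReal)), EReal.coe_zero⟩, EReal.coe_add⟩ : ℝ →+ EReal) g s

theorem stmt16 {n : ℕ} (f : (Fin n → ℤ) → EReal) (hbot : ∀ z, f z ≠ ⊥)
    (hf : IntegrallyConvexFn f)
    (x : Fin n → ℤ) (hx : f x ≠ ⊤) (hmin : ∀ y, f x ≤ f y) :
    IntegrallyConvexSet {z : Fin n → ℤ | ∀ y, f z ≤ f y} := by
  intro x₀ hx₀
  classical
  set m : ℝ := (f x).toReal with hmdef
  have hfx : f x = (m : EReal) := (EReal.coe_toReal hx (hbot x)).symm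
  have hflow : ∀ z, (m : EReal) ≤ f z := fun z => hfx ▸ hmin z
  -- the value set defining localConvexExt at x₀
  set V : Set EReal := { v : EReal | ∃ l : (Fin n → ℤ) →₀ ℝ,
    (∀ z, 0 ≤ l z) ∧ (∀ z ∈ l.support, z ∈ IntNbhd x₀) ∧
    (l.sum fun _ a => a) = 1 ∧
    (l.sum fun z a => a • coeZR z) = x₀ ∧
    v = l.sum fun z a => (a : EReal) * f z } with hV
  have hVdef : localConvexExt f x₀ = sInf V := rfl
  -- upper bound: localConvexExt f ≤ m on the hull
  have hCsub : coeZR '' {z | ∀ y, f z ≤ f y} ⊆ {y | localConvexExt f y ≤ (m : EReal)} := by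
    rintro _ ⟨z, hz, rfl⟩
    have hzm : f z = (m : EReal) := le_antisymm (hfx ▸ hz x) (hflow z)
    have hmem : f z ∈ { v : EReal | ∃ l : (Fin n → ℤ) →₀ ℝ,
        (∀ z, 0 ≤ l z) ∧ (∀ w ∈ l.support, w ∈ IntNbhd (coeZR z)) ∧
        (l.sum fun _ a => a) = 1 ∧
        (l.sum fun w a => a • coeZR w) = coeZR z ∧
        v = l.sum fun w a => (a : EReal) * f w } := by
      refine ⟨Finsupp.single z (1:ℝ), ?_, ?_, ?_, ?_, ?_⟩
      · intro w; rw [Finsupp.single_apply]; split <;> norm_num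
      · intro w hw
        have hwz : w = z := by simpa using Finsupp.support_single_subset hw
        subst hwz
        intro i; simp [coeZR]
      · rw [Finsupp.sum_single_index rfl]
      · rw [Finsupp.sum_single_index (by simp), one_smul]
      · rw [Finsupp.sum_single_index (by simp)]
        simp
    have := sInf_le hmem
    simpa [Set.mem_setOf_eq, localConvexExt, hzm] using this
  have hCconv : Convex ℝ {y | localConvexExt f y ≤ (m : EReal)} := by
    intro p hp q hq a b ha hb hab
    refine (hf p q a b ha hb hab).trans ?_
    calc (a : EReal) * localConvexExt f p + (b : EReal) * localConvexExt f q
        ≤ (a : EReal) * (m : EReal) + (b : EReal) * (m : EReal) :=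
          add_le_add (mul_le_mul_of_nonneg_left hp (by exact_mod_cast ha))
            (mul_le_mul_of_nonneg_left hq (by exact_mod_cast hb))
      _ = (m : EReal) := by
          rw [← EReal.coe_mul, ← EReal.coe_mul, ← EReal.coe_add, ← add_mul, hab, one_mul]
  have hup : localConvexExt f x₀ ≤ (m : EReal) := convexHull_min hCsub hCconv hx₀
  -- finiteness of the neighborhood
  have hNfin : (IntNbhd x₀).Finite := by
    have hsub : IntNbhd x₀ ⊆ Set.pi Set.univ (fun i => Set.Icc (⌈x₀ i⌉ - 1) (⌊x₀ i⌋ + 1)) := by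
      intro z hz i _
      have h := abs_lt.1 (hz i)
      constructor
      · have h1 : ⌈x₀ i⌉ ≤ z i + 1 := Int.ceil_le.2 (by push_cast; linarith [h.2])
        omega
      · have h2 : z i - 1 ≤ ⌊x₀ i⌋ := Int.le_floor.2 (by push_cast; linarith [h.1])
        omega
    exact (Set.Finite.pi (fun i => Set.finite_Icc _ _)).subset hsub
  have hTfin : {z | z ∈ IntNbhd x₀ ∧ f z ≠ ⊤}.Finite := hNfin.subset (fun z hz => hz.1)
  set T : Finset (Fin n → ℤ) := hTfin.toFinset with hT
  set r : (Fin n → ℤ) → ℝ := fun z => (f z).toReal with hr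
  have hTmem : ∀ z ∈ T, z ∈ IntNbhd x₀ ∧ f z ≠ ⊤ := fun z hz => hTfin.mem_toFinset.1 hz
  have hrT : ∀ z ∈ T, f z = (r z : EReal) := fun z hz =>
    (EReal.coe_toReal (hTmem z hz).2 (hbot z)).symm
  have hrm : ∀ z ∈ T, m ≤ r z := by
    intro z hz
    have h1 := hflow z
    rw [hrT z hz] at h1
    exact EReal.coe_le_coe_iff.1 h1
  -- the compact feasible set
  set K : Set (↥T → ℝ) := {w | (∀ z, 0 ≤ w z) ∧ (∑ z, w z) = 1 ∧
    (∑ z, w z • coeZR (z : Fin n → ℤ)) = x₀} with hK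
  -- extraction of feasible weights from finite-valued elements of V
  have hexists : ∀ (l : (Fin n → ℤ) →₀ ℝ), (∀ z, 0 ≤ l z) →
      (∀ z ∈ l.support, z ∈ IntNbhd x₀) →
      (l.sum fun _ a => a) = 1 → (l.sum fun z a => a • coeZR z) = x₀ →
      (l.sum fun z a => (a : EReal) * f z) ≠ ⊤ →
      ∃ w ∈ K, ((∑ z : ↥T, w z * r (z : Fin n → ℤ) : ℝ) : EReal)
        = l.sum fun z a => (a : EReal) * f z := by
    intro l h0 hN h1 hx₀' hnt
    have hsupT : l.support ⊆ T := by
      intro z hz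
      rw [hT, hTfin.mem_toFinset]
      refine ⟨hN z hz, ?_⟩
      intro htop
      apply hnt
      have hzpos : 0 < l z := lt_of_le_of_ne (h0 z) (Ne.symm (Finsupp.mem_support_iff.1 hz))
      have hterm : ((l z : ℝ) : EReal) * f z = ⊤ := by
        rw [htop]; exact EReal.coe_mul_top_of_pos hzpos
      rw [Finsupp.sum, ← Finset.add_sum_erase _ _ hz, hterm]
      apply EReal.top_add_of_ne_bot
      have hrest : ((∑ w ∈ l.support.erase z, l w * m : ℝ) : EReal)
          ≤ ∑ w ∈ l.support.erase z, ((l w : ℝ) : EReal) * f w := by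
        rw [coe_fsum]
        refine Finset.sum_le_sum fun w _ => ?_
        rw [EReal.coe_mul]
        exact mul_le_mul_of_nonneg_left (hflow w) (by exact_mod_cast h0 w)
      intro hb
      rw [hb] at hrest
      exact (not_le.2 (EReal.bot_lt_coe _)) hrest
    refine ⟨fun z => l z, ⟨fun z => h0 z, ?_, ?_⟩, ?_⟩
    · rw [Finset.sum_coe_sort T (fun z => l z), ← h1, Finsupp.sum]
      exact (Finset.sum_subset hsupT (fun z _ hz => Finsupp.notMem_support_iff.1 hz)).symm
    · rw [Finset.sum_coe_sort T (fun z => l z • coeZR z), ← hx₀', Finsupp.sum]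
      exact (Finset.sum_subset hsupT (fun z _ hz => by
        rw [Finsupp.notMem_support_iff.1 hz, zero_smul])).symm
    · rw [Finset.sum_coe_sort T (fun z => l z * r z)]
      have hx1 : ∑ z ∈ T, l z * r z = ∑ z ∈ l.support, l z * r z :=
        (Finset.sum_subset hsupT (fun z _ hz => by
          rw [Finsupp.notMem_support_iff.1 hz, zero_mul])).symm
      rw [hx1, coe_fsum, Finsupp.sum]
      refine Finset.sum_congr rfl fun z hz => ?_
      rw [EReal.coe_mul, hrT z (hsupT hz)]
  -- compactness of K
  have hKsub : K ⊆ Set.Icc (0 : ↥T → ℝ) 1 := by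
    rintro w ⟨h0, h1, -⟩
    constructor
    · rw [Pi.le_def]; intro z; exact h0 z
    · rw [Pi.le_def]; intro z
      have := Finset.single_le_sum (f := w) (fun i _ => h0 i) (Finset.mem_univ z)
      rw [h1] at this
      simpa using this
  have hKclosed : IsClosed K := by
    have h1 : IsClosed {w : ↥T → ℝ | ∀ z, 0 ≤ w z} := by
      rw [Set.setOf_forall]
      exact isClosed_iInter fun z => isClosed_le continuous_const (continuous_apply z)
    have h2 : IsClosed {w : ↥T → ℝ | (∑ z, w z) = 1} :=
      isClosed_eq (continuous_finset_sum _ fun z _ => continuous_apply z) continuous_const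
    have h3 : IsClosed {w : ↥T → ℝ | (∑ z, w z • coeZR (z : Fin n → ℤ)) = x₀} :=
      isClosed_eq (continuous_finset_sum _ fun z _ =>
        (continuous_apply z).smul continuous_const) continuous_const
    have : K = {w : ↥T → ℝ | ∀ z, 0 ≤ w z} ∩ ({w : ↥T → ℝ | (∑ z, w z) = 1} ∩
        {w : ↥T → ℝ | (∑ z, w z • coeZR (z : Fin n → ℤ)) = x₀}) := rfl
    rw [this]
    exact h1.inter (h2.inter h3)
  have hKcomp : IsCompact K := IsCompact.of_isClosed_subset isCompact_Icc hKclosed hKsub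
  -- nonemptiness of K
  have hlt : localConvexExt f x₀ < ⊤ := lt_of_le_of_lt hup (EReal.coe_lt_top m)
  obtain ⟨v, hv, hvlt⟩ := sInf_lt_iff.1 (hVdef ▸ hlt)
  obtain ⟨l, hl0, hlN, hl1, hlx, hlv⟩ := hv
  obtain ⟨w, hwK, -⟩ := hexists l hl0 hlN hl1 hlx (by rw [← hlv]; exact hvlt.ne)
  have hKne : K.Nonempty := ⟨w, hwK⟩
  -- minimize g over K
  set g : (↥T → ℝ) → ℝ := fun w => ∑ z : ↥T, w z * r (z : Fin n → ℤ) with hg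
  have hgc : Continuous g :=
    continuous_finset_sum _ fun z _ => (continuous_apply z).mul continuous_const
  obtain ⟨w₀, hw₀K, hw₀min⟩ := hKcomp.exists_isMinOn hKne hgc.continuousOn
  obtain ⟨hw₀0, hw₀1, hw₀x⟩ := hw₀K
  have hglow : m ≤ g w₀ := by
    have h1 : ∑ z : ↥T, w₀ z * m ≤ g w₀ :=
      Finset.sum_le_sum fun z _ => mul_le_mul_of_nonneg_left (hrm z z.2) (hw₀0 z)
    rwa [← Finset.sum_mul, hw₀1, one_mul] at h1
  have hgup : g w₀ ≤ m := by
    by_contra hcon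
    push_neg at hcon
    have hlt2 : localConvexExt f x₀ < (g w₀ : EReal) :=
      lt_of_le_of_lt hup (EReal.coe_lt_coe_iff.2 hcon)
    obtain ⟨v, hv, hvlt⟩ := sInf_lt_iff.1 (hVdef ▸ hlt2)
    obtain ⟨l, hl0, hlN, hl1, hlx, hlv⟩ := hv
    obtain ⟨w, hwK, hwv⟩ := hexists l hl0 hlN hl1 hlx
      (by rw [← hlv]; exact (hvlt.trans (EReal.coe_lt_top _)).ne)
    have hlt3 : g w < g w₀ := by
      apply EReal.coe_lt_coe_iff.1
      rw [hg]
      rw [show ((∑ z : ↥T, w z * r (z : Fin n → ℤ) : ℝ) : EReal) = v from hwv.trans hlv.symm]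
      exact hvlt
    exact absurd ((isMinOn_iff.1 hw₀min) w hwK) (not_le.2 hlt3)
  have hgm : g w₀ = m := le_antisymm hgup hglow
  -- minimizers have f = m on their support
  have hzero : ∀ z : ↥T, w₀ z * (r ↑z - m) = 0 := by
    have hsum : ∑ z : ↥T, w₀ z * (r ↑z - m) = 0 := by
      have h1 : ∑ z : ↥T, w₀ z * (r ↑z - m) = g w₀ - (∑ z : ↥T, w₀ z) * m := by
        rw [hg, Finset.sum_mul, ← Finset.sum_sub_distrib]
        exact Finset.sum_congr rfl fun z _ => by ring
      rw [h1, hw₀1, one_mul, hgm, sub_self]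
    intro z
    exact (Finset.sum_eq_zero_iff_of_nonneg (fun i _ =>
      mul_nonneg (hw₀0 i) (sub_nonneg.2 (hrm i i.2)))).1 hsum z (Finset.mem_univ z)
  have hmemS : ∀ z : ↥T, w₀ z ≠ 0 →
      (↑z : Fin n → ℤ) ∈ {z | ∀ y, f z ≤ f y} ∩ IntNbhd x₀ := by
    intro z hz
    have hrz : r ↑z = m := by
      rcases mul_eq_zero.1 (hzero z) with h | h
      · exact absurd h hz
      · linarith [sub_eq_zero.1 h]
    refine ⟨?_, (hTmem ↑z z.2).1⟩
    intro y
    calc f ↑z = (r ↑z : EReal) := hrT ↑z z.2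
      _ = (m : EReal) := by rw [hrz]
      _ = f x := hfx.symm
      _ ≤ f y := hmin y
  -- conclude via centerMass
  set t : Finset ↥T := Finset.univ.filter (fun z => w₀ z ≠ 0) with ht
  have htsum : ∑ z ∈ t, w₀ z = 1 := by
    rw [← hw₀1]
    exact Finset.sum_subset (Finset.filter_subset _ _)
      (fun z _ hz => by simpa [ht, Finset.mem_filter] using hz)
  have hcm : t.centerMass (fun z => w₀ z) (fun z => coeZR ↑z) ∈
      convexHull ℝ (coeZR '' ({z | ∀ y, f z ≤ f y} ∩ IntNbhd x₀)) := by
    refine Finset.centerMass_mem_convexHull t (fun i _ => hw₀0 i) (by rw [htsum]; norm_num) ?_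
    intro i hi
    exact ⟨↑i, hmemS i (by simpa [ht, Finset.mem_filter] using hi), rfl⟩
  have hcmx : t.centerMass (fun z => w₀ z) (fun z => coeZR ↑z) = x₀ := by
    rw [Finset.centerMass_eq_of_sum_1 _ _ htsum, ← hw₀x]
    exact Finset.sum_subset (Finset.filter_subset _ _) (fun z _ hz => by
      rw [show w₀ z = 0 from by simpa [ht, Finset.mem_filter] using hz, zero_smul])
  rwa [hcmx] at hcm
end
end

section
/- Let f: ℤⁿ → ℤ ∪ {+∞} be an integer-valued integrally convex function. Then for every x ∈ dom f the subdifferential ∂f(x) = {p ∈ ℝⁿ : f(y) − f(x) ≥ ⟨p, y − x⟩ for all y ∈ ℤⁿ} contains an integer vector. -/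
noncomputable section

def zToE (a : WithTop ℤ) : EReal := WithTop.recTopCoe ⊤ (fun k => ((k : ℝ) : EReal)) a

lemma ERealCoeSum {α : Type*} (s : Finset α) (g : α → ℝ) :
    ((∑ z ∈ s, g z : ℝ) : EReal) = ∑ z ∈ s, ((g z : ℝ) : EReal) :=
  map_sum (⟨⟨Real.toEReal, EReal.coe_zero⟩, EReal.coe_add⟩ : ℝ →+ EReal) _ _

lemma int_cast_abs_lt_one {a b : ℤ} (h : |(a : ℝ) - (b : ℝ)| < 1) : a = b := by
  have : |((a - b : ℤ) : ℝ)| < 1 := by push_cast; simpa using h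
  have h2 : |a - b| < 1 := by exact_mod_cast this
  rw [abs_lt] at h2
  omega

lemma nbhd_int {n : ℕ} (z w : Fin n → ℤ) : w ∈ IntNbhd (coeZR z) ↔ w = z := by
  constructor
  · intro hw
    funext i
    exact (int_cast_abs_lt_one (hw i)).symm
  · rintro rfl
    intro i
    simp [coeZR]

lemma bary_apply {n : ℕ} (l : (Fin n → ℤ) →₀ ℝ) (i : Fin n) :
    (l.sum fun z a => a • coeZR z) i = ∑ z ∈ l.support, l z * (z i : ℝ) := by
  classical
  simp [Finsupp.sum, coeZR]

lemma lce_lower {n : ℕ} (F : (Fin n → ℤ) → EReal) (ξ : Fin n → ℝ) (c : ℝ) (p : Fin n → ℝ)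
    (h : ∀ w ∈ IntNbhd ξ, ((c + ∑ i, p i * (w i : ℝ) : ℝ) : EReal) ≤ F w) :
    ((c + ∑ i, p i * ξ i : ℝ) : EReal) ≤ localConvexExt F ξ := by
  refine le_sInf ?_
  rintro v ⟨l, hl0, hlsupp, hl1, hlbary, rfl⟩
  have hterm : ∀ z ∈ l.support,
      ((l z * (c + ∑ i, p i * (z i : ℝ)) : ℝ) : EReal) ≤ (l z : EReal) * F z := by
    intro z hz
    rw [EReal.coe_mul]
    exact mul_le_mul_of_nonneg_left (h z (hlsupp z hz)) (by exact_mod_cast hl0 z)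
  have hsum : ((∑ z ∈ l.support, l z * (c + ∑ i, p i * (z i : ℝ)) : ℝ) : EReal)
      ≤ l.sum fun z a => (a : EReal) * F z := by
    rw [ERealCoeSum]
    exact Finset.sum_le_sum hterm
  have key : ∑ z ∈ l.support, l z * (c + ∑ i, p i * (z i : ℝ)) = c + ∑ i, p i * ξ i := by
    have h1 : ∑ z ∈ l.support, l z = 1 := hl1
    have h2 : ∀ i, ∑ z ∈ l.support, l z * (z i : ℝ) = ξ i := by
      intro i
      have := congrFun hlbary i
      rwa [bary_apply] at this
    calc ∑ z ∈ l.support, l z * (c + ∑ i, p i * (z i : ℝ))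
        = ∑ z ∈ l.support, (l z * c + ∑ i, p i * (l z * (z i : ℝ))) := by
          refine Finset.sum_congr rfl fun z _ => ?_
          rw [mul_add, Finset.mul_sum]
          congr 1
          refine Finset.sum_congr rfl fun i _ => by ring
      _ = (∑ z ∈ l.support, l z) * c + ∑ i, p i * ∑ z ∈ l.support, l z * (z i : ℝ) := by
          rw [Finset.sum_add_distrib, Finset.sum_mul, Finset.sum_comm]
          congr 1
          exact Finset.sum_congr rfl fun i _ => (Finset.mul_sum _ _ _).symm
      _ = c + ∑ i, p i * ξ i := by
          rw [h1, one_mul]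
          congr 1
          exact Finset.sum_congr rfl fun i _ => by rw [h2]
  rwa [key] at hsum

lemma lce_int {n : ℕ} (F : (Fin n → ℤ) → EReal) (z : Fin n → ℤ) :
    localConvexExt F (coeZR z) = F z := by
  apply le_antisymm
  · apply sInf_le
    refine ⟨Finsupp.single z 1, ?_, ?_, ?_, ?_, ?_⟩
    · intro w
      rw [Finsupp.single_apply]
      split_ifs <;> norm_num
    · intro w hw
      have := Finsupp.support_single_subset hw
      rw [Finset.mem_singleton] at this
      rw [nbhd_int]
      exact this
    · rw [Finsupp.sum_single_index rfl]
    · rw [Finsupp.sum_single_index (by simp), one_smul]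
    · rw [Finsupp.sum_single_index (by rw [EReal.coe_zero, zero_mul]), EReal.coe_one, one_mul]
  · apply le_sInf
    rintro v ⟨l, hl0, hlsupp, hl1, hlbary, rfl⟩
    have hsub : l.support ⊆ {z} := by
      intro w hw
      rw [Finset.mem_singleton]
      exact (nbhd_int z w).mp (hlsupp w hw)
    have hl : l = Finsupp.single z (l z) := Finsupp.support_subset_singleton.mp hsub
    have hz1 : l z = 1 := by
      rw [hl, Finsupp.sum_single_index rfl] at hl1
      exact hl1
    rw [hl, hz1, Finsupp.sum_single_index (by rw [EReal.coe_zero, zero_mul]),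
      EReal.coe_one, one_mul]


def snocEmb {n : ℕ} (c : ℤ) : (Fin n → ℤ) ↪ (Fin (n + 1) → ℤ) :=
  ⟨fun z => Fin.snoc z c, by
    intro a b h
    have := congrArg Fin.init h
    rwa [Fin.init_snoc, Fin.init_snoc] at this⟩

lemma snocEmb_apply {n : ℕ} (c : ℤ) (z : Fin n → ℤ) : snocEmb c z = Fin.snoc z c := rfl

lemma lce_slice {n : ℕ} (F : (Fin (n + 1) → ℤ) → EReal) (c : ℤ) (ξ : Fin n → ℝ) :
    localConvexExt (fun z => F (Fin.snoc z c)) ξ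
      = localConvexExt F (Fin.snoc ξ (c : ℝ)) := by
  classical
  unfold localConvexExt
  congr 1
  ext v
  constructor
  · rintro ⟨l, hl0, hlsupp, hl1, hlbary, rfl⟩
    refine ⟨Finsupp.embDomain (snocEmb c) l, ?_, ?_, ?_, ?_, ?_⟩
    · intro w
      by_cases hw : w ∈ Set.range (snocEmb c)
      · obtain ⟨a, rfl⟩ := hw
        rw [Finsupp.embDomain_apply_self]
        exact hl0 a
      · rw [Finsupp.embDomain_notin_range _ _ _ hw]
    · intro w hw
      rw [Finsupp.support_embDomain, Finset.mem_map] at hw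
      obtain ⟨z, hz, rfl⟩ := hw
      intro i
      refine Fin.lastCases ?_ ?_ i
      · simp [snocEmb_apply, Fin.snoc_last, Function.Embedding.coeFn_mk]
      · intro j
        simpa [snocEmb_apply, Fin.snoc_castSucc, Function.Embedding.coeFn_mk] using hlsupp z hz j
    · rw [Finsupp.sum_embDomain]
      exact hl1
    · rw [Finsupp.sum_embDomain]
      funext i
      refine Fin.lastCases ?_ ?_ i
      · have heq : ((l.sum fun z a => a • coeZR ((snocEmb c) z)) (Fin.last n))
            = ∑ z ∈ l.support, l z * (c : ℝ) := by
          simp [Finsupp.sum, coeZR, snocEmb_apply]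
        rw [heq, ← Finset.sum_mul, show (∑ z ∈ l.support, l z) = (1:ℝ) from hl1, one_mul,
          Fin.snoc_last]
      · intro j
        have heq : ((l.sum fun z a => a • coeZR ((snocEmb c) z)) j.castSucc)
            = ∑ z ∈ l.support, l z * ((z j : ℤ) : ℝ) := by
          simp [Finsupp.sum, coeZR, snocEmb_apply]
        rw [heq, ← bary_apply l j, hlbary, Fin.snoc_castSucc]
    · rw [Finsupp.sum_embDomain]
      rfl
  · rintro ⟨l, hl0, hlsupp, hl1, hlbary, rfl⟩
    have hrange : (l.support : Set (Fin (n+1) → ℤ)) ⊆ Set.range (snocEmb c) := by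
      intro w hw
      have hlast : w (Fin.last n) = c := by
        have := hlsupp w hw (Fin.last n)
        rw [Fin.snoc_last] at this
        exact (int_cast_abs_lt_one this).symm
      refine ⟨Fin.init w, ?_⟩
      show Fin.snoc (Fin.init w) c = w
      rw [← hlast, Fin.snoc_init_self]
    set l' := Finsupp.comapDomain (snocEmb c) l (snocEmb c).injective.injOn with hl'
    have hemb : Finsupp.embDomain (snocEmb c) l' = l := Finsupp.embDomain_comapDomain hrange
    refine ⟨l', ?_, ?_, ?_, ?_, ?_⟩
    · intro z
      exact hl0 _
    · intro z hz
      have hz' : (snocEmb c) z ∈ l.support := by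
        rw [Finsupp.mem_support_iff] at hz ⊢
        exact hz
      intro i
      have := hlsupp _ hz' i.castSucc
      show |ξ i - (z i : ℝ)| < 1
      simp only [snocEmb_apply, Function.Embedding.coeFn_mk, Fin.snoc_castSucc] at this
      exact this
    · rw [← hemb, Finsupp.sum_embDomain] at hl1
      exact hl1
    · rw [← hemb, Finsupp.sum_embDomain] at hlbary
      funext i
      have := congrFun hlbary i.castSucc
      rw [Fin.snoc_castSucc] at this
      rw [show ((l'.sum fun z a => a • coeZR z) i) = ∑ z ∈ l'.support, l' z * ((z i : ℤ) : ℝ)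
        from bary_apply l' i]
      rw [show ((l'.sum fun z a => a • coeZR ((snocEmb c) z)) i.castSucc)
          = ∑ z ∈ l'.support, l' z * (((snocEmb c) z i.castSucc : ℤ) : ℝ) from by
        simp [Finsupp.sum, coeZR]] at this
      simp only [snocEmb_apply, Function.Embedding.coeFn_mk, Fin.snoc_castSucc] at this
      exact this
    · rw [← hemb, Finsupp.sum_embDomain]
      rfl

lemma snoc_convex_comb {n : ℕ} (ξ₁ ξ₂ : Fin n → ℝ) (a b c : ℝ) (hab : a + b = 1) :
    (Fin.snoc (a • ξ₁ + b • ξ₂) c : Fin (n+1) → ℝ)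
      = a • (Fin.snoc ξ₁ c : Fin (n+1) → ℝ) + b • (Fin.snoc ξ₂ c : Fin (n+1) → ℝ) := by
  funext i
  refine Fin.lastCases ?_ ?_ i
  · simp only [Fin.snoc_last, Pi.add_apply, Pi.smul_apply, smul_eq_mul]
    rw [← add_mul, hab, one_mul]
  · intro j
    simp [Fin.snoc_castSucc]

lemma slice_icf {n : ℕ} (F : (Fin (n+1) → ℤ) → EReal) (hF : IntegrallyConvexFn F) (c : ℤ) :
    IntegrallyConvexFn (fun z : Fin n → ℤ => F (Fin.snoc z c)) := by
  intro ξ₁ ξ₂ a b ha hb hab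
  rw [lce_slice, lce_slice, lce_slice, snoc_convex_comb _ _ _ _ _ hab]
  exact hF _ _ a b ha hb hab


lemma zToE_top : zToE ⊤ = ⊤ := rfl

lemma zToE_coe (k : ℤ) : zToE (k : WithTop ℤ) = ((k : ℝ) : EReal) := rfl

theorem subgrad_main : ∀ (n : ℕ) (f : (Fin n → ℤ) → WithTop ℤ),
    IntegrallyConvexFn (fun z => zToE (f z)) → ∀ x : Fin n → ℤ, f x ≠ ⊤ →
    ∃ p : Fin n → ℤ, ∀ y : Fin n → ℤ,
      zToE (f x) + ((∑ i, (p i : ℝ) * ((y i : ℝ) - (x i : ℝ)) : ℝ) : EReal) ≤ zToE (f y) := by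
  intro n
  induction n with
  | zero =>
    intro f hf x hx
    refine ⟨fun _ => 0, fun y => ?_⟩
    have hyx : y = x := funext fun i => i.elim0
    subst hyx
    simp
  | succ n IH =>
    intro f hf x hx
    set c : ℤ := x (Fin.last n) with hc
    obtain ⟨fx, hfx⟩ := WithTop.ne_top_iff_exists.mp hx
    set h : (Fin n → ℤ) → WithTop ℤ := fun z => f (Fin.snoc z c) with hh
    have hicf : IntegrallyConvexFn (fun z => zToE (h z)) := slice_icf _ hf c
    set x' : Fin n → ℤ := Fin.init x with hx'def
    have hsx : (Fin.snoc x' c : Fin (n+1) → ℤ) = x := Fin.snoc_init_self x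
    have hx'top : h x' ≠ ⊤ := by
      show f (Fin.snoc x' c) ≠ ⊤
      rw [hsx]; exact hx
    have hhx' : h x' = (fx : WithTop ℤ) := by
      show f (Fin.snoc x' c) = (fx : WithTop ℤ)
      rw [hsx, ← hfx]
    obtain ⟨p', hp'⟩ := IH h hicf x' hx'top
    -- integer form of the slice subgradient property
    have hp'int : ∀ y' : Fin n → ℤ, ∀ v : ℤ, h y' = (v : WithTop ℤ) →
        fx + ∑ i, p' i * (y' i - x' i) ≤ v := by
      intro y' v hv
      have hle := hp' y'
      rw [hhx', hv, zToE_coe, zToE_coe] at hle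
      have hsum : (∑ i, (p' i : ℝ) * ((y' i : ℝ) - (x' i : ℝ)))
          = ((∑ i, p' i * (y' i - x' i) : ℤ) : ℝ) := by
        push_cast
        rfl
      rw [hsum, ← EReal.coe_add] at hle
      have := EReal.coe_le_coe_iff.mp hle
      exact_mod_cast this
    -- the local box
    set box : Set (Fin n → ℤ) := {d | ∀ i, |d i| ≤ 1} with hbox
    have hboxfin : box.Finite := by
      have hbeq : box = Set.pi Set.univ (fun _ : Fin n => Set.Icc (-1 : ℤ) 1) := by
        ext d
        simp only [hbox, Set.mem_setOf_eq, Set.mem_pi, Set.mem_univ, Set.mem_Icc,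
          forall_true_left, abs_le]
      rw [hbeq]
      exact Set.Finite.pi fun _ => Set.finite_Icc _ _
    -- lower and upper local bound sets
    set LB : Set ℤ := {s | ∃ d ∈ box,
      f (Fin.snoc (fun i => x' i + d i) (c - 1)) = ((fx + ∑ i, p' i * d i - s : ℤ) : WithTop ℤ)}
      with hLB
    set UB : Set ℤ := {t | ∃ d ∈ box,
      f (Fin.snoc (fun i => x' i + d i) (c + 1)) = ((fx + ∑ i, p' i * d i + t : ℤ) : WithTop ℤ)}
      with hUB
    have hLBfin : LB.Finite := by
      have hsub : LB ⊆ (fun d => fx + ∑ i, p' i * d i -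
          WithTop.untopD 0 (f (Fin.snoc (fun i => x' i + d i) (c - 1)))) '' box := by
        rintro s ⟨d, hd, hval⟩
        refine ⟨d, hd, ?_⟩
        simp only
        rw [hval, WithTop.untopD_coe]
        ring
      exact (hboxfin.image _).subset hsub
    have hUBfin : UB.Finite := by
      have hsub : UB ⊆ (fun d => WithTop.untopD 0 (f (Fin.snoc (fun i => x' i + d i) (c + 1)))
          - fx - ∑ i, p' i * d i) '' box := by
        rintro t ⟨d, hd, hval⟩
        refine ⟨d, hd, ?_⟩
        simp only
        rw [hval, WithTop.untopD_coe]
        ring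
      exact (hboxfin.image _).subset hsub
    have hfeas : ∀ s ∈ LB, ∀ t ∈ UB, s ≤ t := by
      rintro s ⟨d, hdbox, hdval⟩ t ⟨e, hebox, heval⟩
      set w₁ : Fin (n+1) → ℤ := Fin.snoc (fun i => x' i + e i) (c + 1) with hw₁
      set w₂ : Fin (n+1) → ℤ := Fin.snoc (fun i => x' i + d i) (c - 1) with hw₂
      set A : ℤ := fx + ∑ i, p' i * e i + t with hA
      set B : ℤ := fx + ∑ i, p' i * d i - s with hB
      set M : Fin (n+1) → ℝ := (1/2 : ℝ) • coeZR w₁ + (1/2 : ℝ) • coeZR w₂ with hM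
      have hcomb := hf (coeZR w₁) (coeZR w₂) (1/2) (1/2) (by norm_num) (by norm_num)
        (by norm_num)
      rw [lce_int, lce_int] at hcomb
      rw [heval, hdval, zToE_coe, zToE_coe, ← EReal.coe_mul, ← EReal.coe_mul,
        ← EReal.coe_add] at hcomb
      set pt : Fin (n+1) → ℝ := Fin.snoc (fun j => (p' j : ℝ)) 0 with hpt
      set c₀ : ℝ := (fx : ℝ) - ∑ j, (p' j : ℝ) * (x' j : ℝ) with hc₀
      have hlow : ∀ u ∈ IntNbhd M, ((c₀ + ∑ i, pt i * (u i : ℝ) : ℝ) : EReal) ≤ zToE (f u) := by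
        intro u hu
        have hMlast : M (Fin.last n) = (c : ℝ) := by
          simp only [hM, Pi.add_apply, Pi.smul_apply, smul_eq_mul, coeZR, hw₁, hw₂,
            Fin.snoc_last]
          push_cast
          ring
        have hulast : u (Fin.last n) = c := by
          have habs := hu (Fin.last n)
          rw [hMlast] at habs
          exact (int_cast_abs_lt_one habs).symm
        have hueq : u = Fin.snoc (Fin.init u) c := by
          rw [← hulast, Fin.snoc_init_self]
        have hineq := hp' (Fin.init u)
        rw [hhx', zToE_coe] at hineq
        have hfu : h (Fin.init u) = f u := by
          show f (Fin.snoc (Fin.init u) c) = f u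
          rw [← hueq]
        rw [hfu] at hineq
        refine le_trans (le_of_eq ?_) hineq
        rw [← EReal.coe_add]
        norm_cast
        rw [Fin.sum_univ_castSucc]
        simp only [hpt, Fin.snoc_castSucc, Fin.snoc_last, zero_mul, add_zero, hc₀,
          Fin.init, mul_sub, Finset.sum_sub_distrib]
        push_cast
        ring
      have hlce := lce_lower (fun z => zToE (f z)) M c₀ pt hlow
      have hMj : ∀ j : Fin n, M j.castSucc = (x' j : ℝ) + ((e j : ℝ) + (d j : ℝ)) / 2 := by
        intro j
        simp only [hM, Pi.add_apply, Pi.smul_apply, smul_eq_mul, coeZR, hw₁, hw₂,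
          Fin.snoc_castSucc]
        push_cast
        ring
      have hMsum : c₀ + ∑ i, pt i * M i
          = (fx : ℝ) + ∑ j, (p' j : ℝ) * (((e j : ℝ) + (d j : ℝ)) / 2) := by
        rw [Fin.sum_univ_castSucc]
        simp only [hpt, Fin.snoc_castSucc, Fin.snoc_last, zero_mul, add_zero]
        rw [Finset.sum_congr rfl (fun j _ => by rw [hMj j])]
        simp only [hc₀, mul_add, Finset.sum_add_distrib]
        ring
      rw [hMsum] at hlce
      have hchain := le_trans hlce hcomb
      rw [EReal.coe_le_coe_iff] at hchain
      have hAc : (A : ℝ) = (fx : ℝ) + (∑ j, (p' j : ℝ) * (e j : ℝ)) + (t : ℝ) := by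
        rw [hA]; push_cast; ring
      have hBc : (B : ℝ) = (fx : ℝ) + (∑ j, (p' j : ℝ) * (d j : ℝ)) - (s : ℝ) := by
        rw [hB]; push_cast; ring
      have hsplit2 : ∑ j, (p' j : ℝ) * (((e j : ℝ) + (d j : ℝ)) / 2)
          = (∑ j, (p' j : ℝ) * (e j : ℝ)) / 2 + (∑ j, (p' j : ℝ) * (d j : ℝ)) / 2 := by
        rw [Finset.sum_div, Finset.sum_div, ← Finset.sum_add_distrib]
        refine Finset.sum_congr rfl fun j _ => by ring
      have hreal : (s : ℝ) ≤ (t : ℝ) := by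
        rw [hAc, hBc, hsplit2] at hchain
        linarith
      exact_mod_cast hreal
    have hq : ∃ q : ℤ, (∀ s ∈ LB, s ≤ q) ∧ (∀ t ∈ UB, q ≤ t) := by
      by_cases hLBne : LB.Nonempty
      · have hne : hLBfin.toFinset.Nonempty := by
          rwa [Set.Finite.toFinset_nonempty]
        refine ⟨hLBfin.toFinset.max' hne, ?_, ?_⟩
        · intro s hs
          exact Finset.le_max' _ _ (hLBfin.mem_toFinset.mpr hs)
        · intro t ht
          have hmem : hLBfin.toFinset.max' hne ∈ LB :=
            hLBfin.mem_toFinset.mp (Finset.max'_mem _ _)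
          exact hfeas _ hmem _ ht
      · by_cases hUBne : UB.Nonempty
        · have hne : hUBfin.toFinset.Nonempty := by
            rwa [Set.Finite.toFinset_nonempty]
          exact ⟨hUBfin.toFinset.min' hne, fun s hs => absurd ⟨s, hs⟩ hLBne,
            fun t ht => Finset.min'_le _ _ (hUBfin.mem_toFinset.mpr ht)⟩
        · exact ⟨0, fun s hs => absurd ⟨s, hs⟩ hLBne, fun t ht => absurd ⟨t, ht⟩ hUBne⟩
    obtain ⟨q, hqL, hqU⟩ := hq
    set P : Fin (n+1) → ℤ := Fin.snoc p' q with hP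
    -- local bound on the box around x
    have hkey : ∀ w : Fin (n+1) → ℤ, (∀ i, |w i - x i| ≤ 1) → ∀ v : ℤ,
        f w = (v : WithTop ℤ) → fx + ∑ i, P i * (w i - x i) ≤ v := by
      intro w hw v hv
      have hsplit : ∑ i, P i * (w i - x i)
          = (∑ j : Fin n, p' j * (w j.castSucc - x' j)) + q * (w (Fin.last n) - c) := by
        rw [Fin.sum_univ_castSucc]
        congr 1
        · refine Finset.sum_congr rfl fun j _ => ?_
          rw [hP, Fin.snoc_castSucc]
          rfl
        · rw [hP, Fin.snoc_last, hc]
      have hlast : |w (Fin.last n) - c| ≤ 1 := by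
        rw [hc]; exact hw _
      rw [abs_le] at hlast
      rcases (by omega : w (Fin.last n) = c - 1 ∨ w (Fin.last n) = c ∨
          w (Fin.last n) = c + 1) with hcase | hcase | hcase
      · -- lower slice
        set d : Fin n → ℤ := fun j => w j.castSucc - x' j with hd
        have hdbox : d ∈ box := by
          intro j
          exact hw j.castSucc
        have hweq : (Fin.snoc (fun i => x' i + d i) (c - 1) : Fin (n+1) → ℤ) = w := by
          funext i
          refine Fin.lastCases ?_ ?_ i
          · rw [Fin.snoc_last, hcase]
          · intro j
            rw [Fin.snoc_castSucc]
            simp [hd]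
        have hLBmem : (fx + ∑ i, p' i * d i - v) ∈ LB := by
          refine ⟨d, hdbox, ?_⟩
          rw [hweq, hv]
          congr 1
          ring
        have hqs := hqL _ hLBmem
        rw [hsplit, hcase]
        have heq : ∑ j, p' j * (w j.castSucc - x' j) = ∑ i, p' i * d i := rfl
        rw [heq, show c - 1 - c = -1 by ring, mul_neg_one]
        linarith [hqs]
      · -- middle slice
        set d' : Fin n → ℤ := Fin.init w with hd'
        have hwd : w = Fin.snoc d' c := by
          rw [hd', ← hcase, Fin.snoc_init_self]
        have hval : h d' = (v : WithTop ℤ) := by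
          show f (Fin.snoc d' c) = _
          rw [← hwd]; exact hv
        have hineq := hp'int d' v hval
        rw [hsplit, hcase]
        simp only [sub_self, mul_zero, add_zero]
        exact hineq
      · -- upper slice
        set d : Fin n → ℤ := fun j => w j.castSucc - x' j with hd
        have hdbox : d ∈ box := by
          intro j
          exact hw j.castSucc
        have hweq : (Fin.snoc (fun i => x' i + d i) (c + 1) : Fin (n+1) → ℤ) = w := by
          funext i
          refine Fin.lastCases ?_ ?_ i
          · rw [Fin.snoc_last, hcase]
          · intro j
            rw [Fin.snoc_castSucc]
            simp [hd]
        have hUBmem : (v - fx - ∑ i, p' i * d i) ∈ UB := by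
          refine ⟨d, hdbox, ?_⟩
          rw [hweq, hv]
          congr 1
          ring
        have hqt := hqU _ hUBmem
        rw [hsplit, hcase]
        have heq : ∑ j, p' j * (w j.castSucc - x' j) = ∑ i, p' i * d i := rfl
        rw [heq, show c + 1 - c = 1 by ring, mul_one]
        linarith [hqt]
    -- globalization
    refine ⟨P, fun y => ?_⟩
    set N : ℕ := Finset.univ.sup (fun i => (y i - x i).natAbs) with hN
    by_cases hN0 : N = 0
    · have hyx : y = x := by
        funext i
        have hle : (y i - x i).natAbs ≤ N :=
          Finset.le_sup (f := fun i => (y i - x i).natAbs) (Finset.mem_univ i)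
        rw [hN0] at hle
        omega
      subst hyx
      rw [← hfx, zToE_coe]
      simp
    · have hN1 : 1 ≤ (N : ℝ) := by
        have h1 : 1 ≤ N := Nat.one_le_iff_ne_zero.mpr hN0
        exact_mod_cast h1
      have hNpos : (0 : ℝ) < N := by linarith
      set b : ℝ := (N : ℝ)⁻¹ with hbdef
      have hb0 : 0 < b := by positivity
      have hb1 : b ≤ 1 := by
        rw [hbdef]
        exact inv_le_one_of_one_le₀ hN1
      set a : ℝ := 1 - b with hadef
      have ha0 : 0 ≤ a := by rw [hadef]; linarith
      set Z : Fin (n+1) → ℝ := a • coeZR x + b • coeZR y with hZ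
      have hcomb := hf (coeZR x) (coeZR y) a b ha0 hb0.le (by rw [hadef]; ring)
      rw [lce_int, lce_int, ← hZ] at hcomb
      set c₁ : ℝ := (fx : ℝ) - ∑ i, (P i : ℝ) * (x i : ℝ) with hc₁
      have hlow : ∀ w ∈ IntNbhd Z,
          ((c₁ + ∑ i, (P i : ℝ) * (w i : ℝ) : ℝ) : EReal) ≤ zToE (f w) := by
        intro w hw
        have hwbox : ∀ i, |w i - x i| ≤ 1 := by
          intro i
          have h1 : |Z i - (w i : ℝ)| < 1 := hw i
          have hZi : Z i - (x i : ℝ) = b * ((y i : ℝ) - (x i : ℝ)) := by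
            simp only [hZ, hadef, Pi.add_apply, Pi.smul_apply, smul_eq_mul, coeZR]
            ring
          have hyxN : |(y i : ℝ) - (x i : ℝ)| ≤ (N : ℝ) := by
            have hna : (y i - x i).natAbs ≤ N :=
              Finset.le_sup (f := fun i => (y i - x i).natAbs) (Finset.mem_univ i)
            have h3 : |y i - x i| ≤ (N : ℤ) := by
              rw [Int.abs_eq_natAbs]
              exact_mod_cast hna
            have h4 : |((y i - x i : ℤ) : ℝ)| ≤ (N : ℝ) := by
              rw [← Int.cast_abs]
              exact_mod_cast h3
            push_cast at h4
            exact h4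
          have h2 : |Z i - (x i : ℝ)| ≤ 1 := by
            rw [hZi, abs_mul, abs_of_pos hb0]
            calc b * |(y i : ℝ) - (x i : ℝ)| ≤ b * (N : ℝ) :=
                  mul_le_mul_of_nonneg_left hyxN hb0.le
              _ = 1 := by rw [hbdef]; field_simp
          have h5 : |(w i : ℝ) - (x i : ℝ)| < 2 := by
            have htri := abs_sub_le ((w i : ℝ)) (Z i) ((x i : ℝ))
            have h1' : |(w i : ℝ) - Z i| < 1 := by rw [abs_sub_comm]; exact h1
            linarith
          have h6 : |((w i - x i : ℤ) : ℝ)| < 2 := by push_cast; exact h5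
          have h7 : |w i - x i| < 2 := by exact_mod_cast h6
          omega
        by_cases hwt : f w = ⊤
        · rw [hwt, zToE_top]; exact le_top
        · obtain ⟨v, hv⟩ := WithTop.ne_top_iff_exists.mp hwt
          have hint := hkey w hwbox v hv.symm
          rw [← hv, zToE_coe]
          have hre : c₁ + ∑ i, (P i : ℝ) * (w i : ℝ)
              = ((fx + ∑ i, P i * (w i - x i) : ℤ) : ℝ) := by
            rw [hc₁]
            push_cast
            simp only [mul_sub, Finset.sum_sub_distrib]
            ring
          rw [hre]
          exact_mod_cast hint
      have hlce := lce_lower (fun z => zToE (f z)) Z c₁ (fun i => (P i : ℝ)) hlow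
      have hZi2 : ∀ i, Z i = (x i : ℝ) + b * ((y i : ℝ) - (x i : ℝ)) := by
        intro i
        simp only [hZ, hadef, Pi.add_apply, Pi.smul_apply, smul_eq_mul, coeZR]
        ring
      have hZsum : c₁ + ∑ i, (P i : ℝ) * Z i
          = (fx : ℝ) + b * ∑ i, (P i : ℝ) * ((y i : ℝ) - (x i : ℝ)) := by
        rw [Finset.sum_congr rfl fun i _ => by rw [hZi2 i]]
        have e1 : ∑ i, (P i : ℝ) * ((x i : ℝ) + b * ((y i : ℝ) - (x i : ℝ)))
            = ∑ i, (P i : ℝ) * (x i : ℝ)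
              + b * ∑ i, (P i : ℝ) * ((y i : ℝ) - (x i : ℝ)) := by
          rw [Finset.mul_sum, ← Finset.sum_add_distrib]
          exact Finset.sum_congr rfl fun i _ => by ring
        rw [e1, hc₁]
        ring
      rw [hZsum] at hlce
      by_cases hyt : f y = ⊤
      · rw [hyt, zToE_top]; exact le_top
      · obtain ⟨m, hm⟩ := WithTop.ne_top_iff_exists.mp hyt
        rw [← hm, ← hfx, zToE_coe, zToE_coe] at hcomb
        rw [← EReal.coe_mul, ← EReal.coe_mul, ← EReal.coe_add] at hcomb
        have hchain := le_trans hlce hcomb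
        rw [EReal.coe_le_coe_iff] at hchain
        rw [hadef] at hchain
        have hexp : (1 - b) * (fx : ℝ) = (fx : ℝ) - b * (fx : ℝ) := by ring
        rw [hexp] at hchain
        have hmul : b * ((fx : ℝ) + ∑ i, (P i : ℝ) * ((y i : ℝ) - (x i : ℝ)))
            ≤ b * (m : ℝ) := by
          rw [mul_add]
          linarith
        have hS : (fx : ℝ) + ∑ i, (P i : ℝ) * ((y i : ℝ) - (x i : ℝ)) ≤ (m : ℝ) :=
          le_of_mul_le_mul_left hmul hb0
        rw [← hm, ← hfx, zToE_coe, zToE_coe, ← EReal.coe_add]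
        exact EReal.coe_le_coe_iff.mpr hS

theorem stmt18 {n : ℕ} (f : (Fin n → ℤ) → WithTop ℤ)
    (hf : IntegrallyConvexFn (fun z => zToE (f z)))
    (x : Fin n → ℤ) (hx : f x ≠ ⊤) :
    ∃ p : Fin n → ℝ, (∀ i, ∃ k : ℤ, p i = (k : ℝ)) ∧
      ∀ y : Fin n → ℤ,
        zToE (f x) + ((∑ i, p i * ((y i : ℝ) - (x i : ℝ)) : ℝ) : EReal) ≤ zToE (f y) := by
  obtain ⟨p, hp⟩ := subgrad_main n f hf x hx
  exact ⟨fun i => (p i : ℝ), fun i => ⟨p i, rfl⟩, hp⟩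
end
end
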